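/- arXiv:2407.14764 — 3 statements merged into one kernel-verified Lean document; each statement's English description precedes it below -/
import Mathlib

section
/- Let Γ ⊆ ℝ^n be a positive affine semigroup. Then the lattice generated by the dual semigroup equals the dual lattice of Λ_Γ, i.e. Λ_{Γ*} = (Λ_Γ)*. -/
open Matrix BigOperators

noncomputable section

/-- The ambient space `ℝ^n`. -/
abbrev V (n : ℕ) := Fin n → ℝ

/-- The difference set `Λ_Γ = {x - y : x, y ∈ Γ}` of a set `Γ ⊆ ℝ^n`. -/
def diffSet {n : ℕ} (Γ : Set (V n)) : Set (V n) := {z | ∃ x ∈ Γ, ∃ y ∈ Γ, z = x - y}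

/-- A set is discrete if each of its points is isolated in it. -/
def IsDiscreteSet {n : ℕ} (Λ : Set (V n)) : Prop :=
  ∀ x ∈ Λ, ∃ ε : ℝ, 0 < ε ∧ ∀ y ∈ Λ, dist y x < ε → y = x

/-- An affine semigroup: a finitely generated additive submonoid of `ℝ^n` whose
difference group is discrete (a lattice). -/
def IsAffineSemigroup {n : ℕ} (Γ : Set (V n)) : Prop :=
  (∃ S : Finset (V n), (AddSubmonoid.closure (S : Set (V n)) : Set (V n)) = Γ) ∧
    IsDiscreteSet (diffSet Γ)

/-- A set is positive if `0` is its only element whose negative also belongs to it. -/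
def IsPositive {n : ℕ} (Γ : Set (V n)) : Prop := ∀ x ∈ Γ, -x ∈ Γ → x = 0

/-- The convex cone `K_Γ` of all nonnegative real combinations of elements of `Γ`. -/
def coneOf {n : ℕ} (Γ : Set (V n)) : Set (V n) :=
  {y | ∃ (k : ℕ) (c : Fin k → ℝ) (v : Fin k → V n),
    (∀ i, 0 ≤ c i) ∧ (∀ i, v i ∈ Γ) ∧ y = ∑ i, c i • v i}

/-- The dual cone `K* = {y : ⟨x,y⟩ ≥ 0 for all x ∈ K}`. -/
def dualCone {n : ℕ} (K : Set (V n)) : Set (V n) := {y | ∀ x ∈ K, 0 ≤ x ⬝ᵥ y}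

/-- The dual lattice `Λ* = {w ∈ span(Λ) : ⟨w,v⟩ ∈ ℤ for all v ∈ Λ}`. -/
def dualLattice {n : ℕ} (Λ : Set (V n)) : Set (V n) :=
  {w | w ∈ Submodule.span ℝ Λ ∧ ∀ v ∈ Λ, ∃ m : ℤ, w ⬝ᵥ v = (m : ℝ)}

/-- The dual affine semigroup `Γ* = (Λ_Γ)* ∩ (K_Γ)*`. -/
def dualSemigroup {n : ℕ} (Γ : Set (V n)) : Set (V n) :=
  dualLattice (diffSet Γ) ∩ dualCone (coneOf Γ)

/-- `A` generates the additive monoid `Γ`. -/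
def IsGenSet {n : ℕ} (A Γ : Set (V n)) : Prop := (AddSubmonoid.closure A : Set (V n)) = Γ

/-- `A` is a minimal generating set of the additive monoid `Γ`: it generates, and no
proper subset of it generates. -/
def IsMinGenSet {n : ℕ} (A Γ : Set (V n)) : Prop :=
  IsGenSet A Γ ∧ ∀ B ⊂ A, ¬ IsGenSet B Γ

/-- `S` is the slack matrix of the positive affine semigroup `Γ`: its `(i,j)` entry is
`⟨a i, b j⟩` where `a`, `b` enumerate the minimal generating sets of `Γ` and `Γ*`. -/
def IsSlackMatrix {n k l : ℕ} (Γ : Set (V n)) (S : Matrix (Fin k) (Fin l) ℤ) : Prop :=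
  ∃ (a : Fin k → V n) (b : Fin l → V n),
    Function.Injective a ∧ Function.Injective b ∧
    IsMinGenSet (Set.range a) Γ ∧ IsMinGenSet (Set.range b) (dualSemigroup Γ) ∧
    ∀ i j, (S i j : ℝ) = a i ⬝ᵥ b j

/-- The `i`-th row of an integer matrix, viewed as a real vector. -/
def rowVec {k l : ℕ} (S : Matrix (Fin k) (Fin l) ℤ) (i : Fin k) : V l := fun j => (S i j : ℝ)

/-- The `j`-th column of an integer matrix, viewed as a real vector. -/
def colVec {k l : ℕ} (S : Matrix (Fin k) (Fin l) ℤ) (j : Fin l) : V k := fun i => (S i j : ℝ)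

/-- `Γ_S^row`: all nonnegative integer combinations of the rows of `S`. -/
def GammaRow {k l : ℕ} (S : Matrix (Fin k) (Fin l) ℤ) : Set (V l) :=
  {x | ∃ c : Fin k → ℕ, x = ∑ i, (c i : ℝ) • rowVec S i}

/-- `Γ_S^col`: all nonnegative integer combinations of the columns of `S`. -/
def GammaCol {k l : ℕ} (S : Matrix (Fin k) (Fin l) ℤ) : Set (V k) :=
  {x | ∃ c : Fin l → ℕ, x = ∑ j, (c j : ℝ) • colVec S j}

/-- `Λ_S^row`: all integer combinations of the rows of `S`. -/
def LambdaRow {k l : ℕ} (S : Matrix (Fin k) (Fin l) ℤ) : Set (V l) :=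
  {x | ∃ c : Fin k → ℤ, x = ∑ i, (c i : ℝ) • rowVec S i}

/-- `Λ_S^col`: all integer combinations of the columns of `S`. -/
def LambdaCol {k l : ℕ} (S : Matrix (Fin k) (Fin l) ℤ) : Set (V k) :=
  {x | ∃ c : Fin l → ℤ, x = ∑ j, (c j : ℝ) • colVec S j}

/-- `K_S^row`: all nonnegative real combinations of the rows of `S`. -/
def KRow {k l : ℕ} (S : Matrix (Fin k) (Fin l) ℤ) : Set (V l) :=
  {x | ∃ c : Fin k → ℝ, (∀ i, 0 ≤ c i) ∧ x = ∑ i, c i • rowVec S i}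

/-- `K_S^col`: all nonnegative real combinations of the columns of `S`. -/
def KCol {k l : ℕ} (S : Matrix (Fin k) (Fin l) ℤ) : Set (V k) :=
  {x | ∃ c : Fin l → ℝ, (∀ j, 0 ≤ c j) ∧ x = ∑ j, c j • colVec S j}

/-- `Row(S)`: the row space of `S` over `ℝ`. -/
def RowSpace {k l : ℕ} (S : Matrix (Fin k) (Fin l) ℤ) : Set (V l) :=
  (Submodule.span ℝ (Set.range (rowVec S)) : Set (V l))

/-- `Col(S)`: the column space of `S` over `ℝ`. -/
def ColSpace {k l : ℕ} (S : Matrix (Fin k) (Fin l) ℤ) : Set (V k) :=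
  (Submodule.span ℝ (Set.range (colVec S)) : Set (V k))

/-- `ℤ^l` viewed inside `ℝ^l`. -/
def intPts (l : ℕ) : Set (V l) := {x | ∀ j, ∃ m : ℤ, x j = (m : ℝ)}

/-- `ℤ₊^l` viewed inside `ℝ^l`. -/
def nnIntPts (l : ℕ) : Set (V l) := {x | ∀ j, ∃ m : ℕ, x j = (m : ℝ)}

/-- `ℝ₊^l`: the nonnegative orthant. -/
def nnPts (l : ℕ) : Set (V l) := {x | ∀ j, 0 ≤ x j}

/-- `ι` (a linear map restricting to an additive semigroup homomorphism `Γ → Γ'`) is a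
lift of the positive affine semigroup `Γ`: `Γ'` is a positive affine semigroup and the
adjoint `ι*` (characterized on `Γ` by `⟨x, ι*(y)⟩ = ⟨ι(x), y⟩`) satisfies
`ι*(Γ'*) = Γ*`. -/
structure IsLift {n N : ℕ} (Γ : Set (V n)) (Γ' : Set (V N)) (ι : (V n) →ₗ[ℝ] (V N)) : Prop where
  lift_semigroup : IsAffineSemigroup Γ'
  lift_positive : IsPositive Γ'
  maps_to : ∀ x ∈ Γ, ι x ∈ Γ'
  adjoint_mem : ∀ y ∈ dualSemigroup Γ', ∃ z ∈ dualSemigroup Γ, ∀ x ∈ Γ, x ⬝ᵥ z = (ι x) ⬝ᵥ y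
  adjoint_surj : ∀ z ∈ dualSemigroup Γ, ∃ y ∈ dualSemigroup Γ', ∀ x ∈ Γ, x ⬝ᵥ z = (ι x) ⬝ᵥ y

/-- The nonnegative integer rank: the least inner dimension of a factorization
`A = B * C` with `B`, `C` nonnegative integer matrices. -/
def nnIntRank {m l : Type*} [Fintype m] [Fintype l] (A : Matrix m l ℤ) : ℕ :=
  sInf {r : ℕ | ∃ (B : Matrix m (Fin r) ℤ) (C : Matrix (Fin r) l ℤ),
    (∀ i j, 0 ≤ B i j) ∧ (∀ i j, 0 ≤ C i j) ∧ A = B * C}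

/-- The nonnegative rank: the least inner dimension of a factorization
`A = B * C` with `B`, `C` nonnegative real matrices. -/
def nnRank {m l : Type*} [Fintype m] [Fintype l] (A : Matrix m l ℤ) : ℕ :=
  sInf {r : ℕ | ∃ (B : Matrix m (Fin r) ℝ) (C : Matrix (Fin r) l ℝ),
    (∀ i j, 0 ≤ B i j) ∧ (∀ i j, 0 ≤ C i j) ∧ A.map (fun z => (z : ℝ)) = B * C}

/-- The Fibonacci semigroup `Γ^Fib_n = ℤ² ∩ {(x,y) : 0 ≤ F_{2n}·y ≤ F_{2n+2}·x}`
(with `Nat.fib`, so `F 1 = F 2 = 1`). -/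
def GammaFib (n : ℕ) : Set (V 2) :=
  {p | (∃ a : ℤ, p 0 = (a : ℝ)) ∧ (∃ b : ℤ, p 1 = (b : ℝ)) ∧
    0 ≤ (Nat.fib (2 * n) : ℝ) * p 1 ∧
    (Nat.fib (2 * n) : ℝ) * p 1 ≤ (Nat.fib (2 * n + 2) : ℝ) * p 0}

/-- Fibonacci numbers extended to negative indices by `F_{-m} = (-1)^{m+1} F_m`. -/
def fibZ (m : ℤ) : ℤ :=
  if 0 ≤ m then (Nat.fib m.toNat : ℤ)
  else (-1) ^ ((-m).toNat + 1) * (Nat.fib (-m).toNat : ℤ)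

/-- The `(n+1) × (n+1)` Toeplitz matrix with `(i,j)` entry `F_{2(i-j)+1}`. -/
def Mfib (n : ℕ) : Matrix (Fin (n + 1)) (Fin (n + 1)) ℤ :=
  fun i j => fibZ (2 * ((i : ℤ) - (j : ℤ)) + 1)

/-- `‖A‖₁`: the sum of all entries of a matrix. -/
def entrySum {m l : Type*} [Fintype m] [Fintype l] (A : Matrix m l ℤ) : ℤ := ∑ i, ∑ j, A i j

/-! ### Auxiliary lemmas -/

section Aux

open Finset

/-- Dot product with a sum of scalar multiples. -/
lemma dot_sum_smul {n : ℕ} {ι : Type*} (t : Finset ι) (x : V n) (f : ι → ℝ) (y : ι → V n) :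
    x ⬝ᵥ (∑ i ∈ t, f i • y i) = ∑ i ∈ t, f i * (x ⬝ᵥ y i) := by
  simp only [dotProduct, Finset.sum_apply, Pi.smul_apply, smul_eq_mul, Finset.mul_sum]
  rw [Finset.sum_comm]
  exact Finset.sum_congr rfl fun i _ => Finset.sum_congr rfl fun j _ => by ring

/-- A rational linear system which has a real solution has a rational solution. -/
lemma rat_solution {ι κ : Type*} [Fintype ι] [Fintype κ] [DecidableEq ι]
    (A : ι → κ → ℚ) (bb : ι → ℚ) (x : κ → ℝ)
    (hx : ∀ i, ∑ j, (A i j : ℝ) * x j = (bb i : ℝ)) :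
    ∃ q : κ → ℚ, ∀ i, ∑ j, A i j * q j = bb i := by
  by_cases hb : bb ∈ Submodule.span ℚ (Set.range fun j => fun i => A i j)
  · rw [Submodule.mem_span_range_iff_exists_fun] at hb
    obtain ⟨q, hq⟩ := hb
    refine ⟨q, fun i => ?_⟩
    have := congrFun hq i
    simp only [Finset.sum_apply, Pi.smul_apply, smul_eq_mul] at this
    rw [← this]
    exact Finset.sum_congr rfl fun j _ => mul_comm _ _
  · exfalso
    set U := Submodule.span ℚ (Set.range fun j => fun i => A i j) with hU
    have hπ : U.mkQ bb ≠ 0 := by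
      simpa [Submodule.Quotient.mk_eq_zero] using hb
    obtain ⟨g, hg⟩ : ∃ g : Module.Dual ℚ ((ι → ℚ) ⧸ U), g (U.mkQ bb) ≠ 0 := by
      by_contra hcon
      push_neg at hcon
      exact hπ ((Module.forall_dual_apply_eq_zero_iff ℚ _).1 hcon)
    set f : (ι → ℚ) →ₗ[ℚ] ℚ := g ∘ₗ U.mkQ with hfdef
    have hcol : ∀ j, f (fun i => A i j) = 0 := by
      intro j
      have hmem : (fun i => A i j) ∈ U := Submodule.subset_span ⟨j, rfl⟩
      have : U.mkQ (fun i => A i j) = 0 := (Submodule.Quotient.mk_eq_zero U).2 hmem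
      simp [hfdef, LinearMap.comp_apply, this]
    have hfb : f bb ≠ 0 := hg
    set y : ι → ℚ := fun i => f (fun i' => if i = i' then 1 else 0) with hy
    have hf : ∀ v : ι → ℚ, f v = ∑ i, v i * y i := by
      intro v
      conv_lhs => rw [pi_eq_sum_univ v]
      rw [map_sum]
      exact Finset.sum_congr rfl fun i _ => by rw [_root_.map_smul, smul_eq_mul]
    have h1 : ∀ j, (∑ i, A i j * y i) = 0 := fun j => by rw [← hf]; exact hcol j
    have h2 : (∑ i, bb i * y i) ≠ 0 := by rw [← hf]; exact hfb
    apply h2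
    have hreal : ((∑ i, bb i * y i : ℚ) : ℝ) = 0 := by
      push_cast
      calc ∑ i, (bb i : ℝ) * (y i : ℝ)
          = ∑ i, (∑ j, (A i j : ℝ) * x j) * (y i : ℝ) :=
            Finset.sum_congr rfl fun i _ => by rw [hx i]
        _ = ∑ j, (∑ i, (A i j : ℝ) * (y i : ℝ)) * x j := by
            simp only [Finset.sum_mul]
            rw [Finset.sum_comm]
            exact Finset.sum_congr rfl fun i _ => Finset.sum_congr rfl fun j _ => by ring
        _ = 0 := by
            refine Finset.sum_eq_zero fun j _ => ?_
            have : ((∑ i, A i j * y i : ℚ) : ℝ) = 0 := by rw [h1 j]; norm_cast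
            push_cast at this
            rw [this, zero_mul]
    exact_mod_cast hreal

/-- Clearing denominators of a finite family of rationals. -/
lemma rat_clear {κ : Type*} [Fintype κ] (q : κ → ℚ) :
    ∃ N : ℕ, 0 < N ∧ ∀ j, ∃ m : ℤ, (m : ℚ) = q j * N := by
  refine ⟨∏ j, (q j).den, Finset.prod_pos fun j _ => (q j).pos, fun j => ?_⟩
  obtain ⟨k, hk⟩ := Finset.dvd_prod_of_mem (fun j => (q j).den) (Finset.mem_univ j)
  refine ⟨(q j).num * k, ?_⟩
  have hden : ((q j).den : ℚ) ≠ 0 := by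
    exact_mod_cast (q j).den_nz
  have h1 : ((q j).num : ℚ) = q j * (q j).den :=
    ((eq_div_iff hden).1 (Rat.num_div_den (q j)).symm).symm
  rw [hk]
  push_cast
  rw [h1]
  ring

/-- Gordan-type theorem: a finite set of integer vectors admitting no nontrivial
nonnegative integer relation can be strictly separated from `0` by an integer vector. -/
lemma gordan {ι : Type*} [Fintype ι] (T : Finset (ι → ℝ))
    (hint : ∀ v ∈ T, ∀ i, ∃ m : ℤ, v i = (m : ℝ))
    (hrel : ∀ c : (ι → ℝ) → ℕ, ∑ v ∈ T, (c v : ℝ) • v = 0 → ∀ v ∈ T, c v = 0) :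
    ∃ c : ι → ℤ, ∀ v ∈ T, 0 < ∑ i, v i * (c i : ℝ) := by
  classical
  -- Step 1: `0` is not in the convex hull of `T`.
  have h0 : (0 : ι → ℝ) ∉ convexHull ℝ (T : Set (ι → ℝ)) := by
    intro h0
    rw [convexHull_eq_union] at h0
    simp only [Set.mem_iUnion] at h0
    obtain ⟨t, hts, hai, h0t⟩ := h0
    rw [Finset.convexHull_eq] at h0t
    obtain ⟨w, hw0, hw1, hwc⟩ := h0t
    rw [Finset.centerMass_eq_of_sum_1 _ _ hw1] at hwc
    simp only [id] at hwc
    -- choose integer entries for elements of `t`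
    have hintt : ∀ v : {x // x ∈ t}, ∀ i, ∃ m : ℤ, (v : ι → ℝ) i = (m : ℝ) :=
      fun v i => hint v (hts v.2) i
    set zq : {x // x ∈ t} → ι → ℤ := fun v i => (hintt v i).choose with hzqdef
    have hzq : ∀ (v : {x // x ∈ t}) (i : ι), ((zq v i : ℤ) : ℝ) = (v : ι → ℝ) i :=
      fun v i => ((hintt v i).choose_spec).symm
    -- set up the rational linear system
    set A : Option ι → {x // x ∈ t} → ℚ := fun o v => o.elim 1 (fun i => (zq v i : ℚ)) with hA
    set bb : Option ι → ℚ := fun o => o.elim 1 (fun _ => 0) with hbb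
    have hsys : ∀ o, ∑ v, (A o v : ℝ) * w (v : ι → ℝ) = (bb o : ℝ) := by
      rintro (_ | i)
      · simp only [hA, hbb, Option.elim, Rat.cast_one, one_mul]
        rw [Finset.sum_coe_sort t (fun x => w x)]
        exact_mod_cast hw1
      · simp only [hA, hbb, Option.elim, Rat.cast_intCast, Rat.cast_zero]
        have : ∀ v : {x // x ∈ t}, ((zq v i : ℤ) : ℝ) * w (v : ι → ℝ)
            = w (v : ι → ℝ) * (v : ι → ℝ) i := fun v => by rw [hzq]; ring
        rw [Finset.sum_congr rfl fun v _ => this v]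
        have := congrFun hwc i
        simp only [Finset.sum_apply, Pi.smul_apply, smul_eq_mul, Pi.zero_apply] at this
        rw [Finset.sum_coe_sort t (fun x => w x * x i)]
        exact this
    obtain ⟨q, hq⟩ := rat_solution A bb (fun v => w (v : ι → ℝ)) hsys
    have hqsum : ∑ v, q v = 1 := by simpa [hA, hbb] using hq none
    have hqlin : ∀ i, ∑ v, (zq v i : ℚ) * q v = 0 := fun i => by
      simpa [hA, hbb] using hq (some i)
    -- uniqueness of affine combinations
    have hw1sum : ∑ v : {x // x ∈ t}, w (v : ι → ℝ) = 1 := by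
      rw [Finset.sum_coe_sort t (fun x => w x)]; exact hw1
    have hw2sum : ∑ v : {x // x ∈ t}, (q v : ℝ) = 1 := by exact_mod_cast hqsum
    have hcomb1 : ∑ v : {x // x ∈ t}, w (v : ι → ℝ) • (v : ι → ℝ) = 0 := by
      rw [Finset.sum_coe_sort t (fun x => w x • x)]; exact hwc
    have hcomb2 : ∑ v : {x // x ∈ t}, (q v : ℝ) • (v : ι → ℝ) = 0 := by
      funext i
      simp only [Finset.sum_apply, Pi.smul_apply, smul_eq_mul, Pi.zero_apply]
      have hz : ((∑ v, (zq v i : ℚ) * q v : ℚ) : ℝ) = 0 := by rw [hqlin i]; norm_cast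
      push_cast at hz
      rw [← hz]
      exact Finset.sum_congr rfl fun v _ => by rw [← hzq]; ring
    have heq : (fun v : {x // x ∈ t} => w (v : ι → ℝ)) = fun v => (q v : ℝ) := by
      refine (affineIndependent_iff_eq_of_fintype_affineCombination_eq ℝ
        (fun v : {x // x ∈ t} => (v : ι → ℝ))).1 hai _ _ hw1sum hw2sum ?_
      rw [Finset.univ.affineCombination_eq_linear_combination _ _ hw1sum,
        Finset.univ.affineCombination_eq_linear_combination _ _ hw2sum, hcomb1, hcomb2]
    have hqnn : ∀ v : {x // x ∈ t}, 0 ≤ q v := by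
      intro v
      have h := hw0 _ v.2
      have h2 : (0 : ℝ) ≤ (q v : ℝ) := by rw [← congrFun heq v]; exact h
      exact_mod_cast h2
    -- clear denominators
    obtain ⟨N, hN, hmm⟩ := rat_clear q
    choose mz hmz using hmm
    have hmznn : ∀ v, 0 ≤ mz v := fun v => by
      have : (0 : ℚ) ≤ (mz v : ℚ) := by
        rw [hmz v]
        exact mul_nonneg (hqnn v) (by positivity)
      exact_mod_cast this
    set c' : {x // x ∈ t} → ℕ := fun v => (mz v).toNat with hc'def
    have hc'cast : ∀ v, ((c' v : ℕ) : ℚ) = q v * N := fun v => by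
      rw [hc'def]
      have : ((mz v).toNat : ℤ) = mz v := Int.toNat_of_nonneg (hmznn v)
      rw [show (((mz v).toNat : ℕ) : ℚ) = (((mz v).toNat : ℤ) : ℚ) by push_cast; ring, this,
        hmz v]
    set c : (ι → ℝ) → ℕ := fun x => if h : ∃ v : {x' // x' ∈ t}, (v : ι → ℝ) = x
      then c' h.choose else 0 with hcdef
    have hcv : ∀ v : {x // x ∈ t}, c (v : ι → ℝ) = c' v := by
      intro v
      have hex : ∃ v' : {x' // x' ∈ t}, (v' : ι → ℝ) = (v : ι → ℝ) := ⟨v, rfl⟩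
      simp only [hcdef, dif_pos hex]
      congr 1
      exact Subtype.ext hex.choose_spec
    have hczero : ∀ x ∈ T, x ∉ t → c x = 0 := by
      intro x _ hxt
      simp only [hcdef]
      rw [dif_neg]
      rintro ⟨v, rfl⟩
      exact hxt v.2
    have hcsum : ∑ x ∈ T, (c x : ℝ) • x = 0 := by
      have hsub : t ⊆ T := Finset.coe_subset.1 hts
      rw [← Finset.sum_subset hsub (fun x hx hxt => by rw [hczero x hx hxt]; simp)]
      rw [← Finset.sum_coe_sort t (fun x => (c x : ℝ) • x)]
      have : ∀ v : {x // x ∈ t}, (c (v : ι → ℝ) : ℝ) • (v : ι → ℝ)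
          = (N : ℝ) • ((q v : ℝ) • (v : ι → ℝ)) := by
        intro v
        rw [hcv v, smul_smul]
        congr 1
        have h3 : ((c' v : ℕ) : ℝ) = (q v : ℝ) * N := by
          exact_mod_cast congrArg (Rat.cast (K := ℝ)) (hc'cast v)
        rw [h3]; ring
      rw [Finset.sum_congr rfl fun v _ => this v, ← Finset.smul_sum, hcomb2, smul_zero]
    have hall := hrel c hcsum
    -- some coefficient is positive
    obtain ⟨v0, hv0⟩ : ∃ v : {x // x ∈ t}, q v ≠ 0 := by
      by_contra hcon
      push_neg at hcon
      rw [Finset.sum_congr rfl fun v _ => hcon v] at hqsum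
      simp at hqsum
    have hv0pos : 0 < q v0 := lt_of_le_of_ne (hqnn v0) (Ne.symm hv0)
    have hc'pos : c' v0 ≠ 0 := by
      intro hc0
      have := hc'cast v0
      rw [hc0] at this
      simp only [Nat.cast_zero] at this
      have hN' : (0 : ℚ) < N := by exact_mod_cast hN
      nlinarith
    exact hc'pos (by rw [← hcv v0]; exact hall _ (hts v0.2))
  -- Step 2: separation by a continuous linear functional
  obtain ⟨f, u, hfu, hub⟩ := geometric_hahn_banach_point_closed
    (convex_convexHull ℝ _) ((T.finite_toSet.isCompact_convexHull ℝ).isClosed) h0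
  have hu : 0 < u := by simpa using hfu
  set y0 : ι → ℝ := fun i => f (fun j => if i = j then 1 else 0) with hy0
  have hfeq : ∀ v : ι → ℝ, f v = ∑ i, v i * y0 i := by
    intro v
    conv_lhs => rw [pi_eq_sum_univ v]
    rw [map_sum]
    exact Finset.sum_congr rfl fun i _ => by rw [_root_.map_smul, smul_eq_mul]
  have hvy : ∀ v ∈ T, u < ∑ i, v i * y0 i := by
    intro v hv
    rw [← hfeq]
    exact hub v (subset_convexHull ℝ _ hv)
  -- Step 3: rational approximation
  set M : ℝ := ∑ v ∈ T, ∑ i, |v i| with hM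
  have hM0 : 0 ≤ M := Finset.sum_nonneg fun v _ => Finset.sum_nonneg fun i _ => abs_nonneg _
  set δ : ℝ := u / (M + 1) with hδdef
  have hδ : 0 < δ := div_pos hu (by linarith)
  choose qr hqr using fun i => exists_rat_near (y0 i) hδ
  have key : ∀ v ∈ T, 0 < ∑ i, v i * (qr i : ℝ) := by
    intro v hv
    have hvM : ∑ i, |v i| ≤ M :=
      Finset.single_le_sum (f := fun v => ∑ i, |v i|)
        (fun x _ => Finset.sum_nonneg fun i _ => abs_nonneg _) hv
    have hbd : |∑ i, v i * ((qr i : ℝ) - y0 i)| ≤ M * δ := by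
      calc |∑ i, v i * ((qr i : ℝ) - y0 i)| ≤ ∑ i, |v i * ((qr i : ℝ) - y0 i)| :=
            Finset.abs_sum_le_sum_abs _ _
        _ ≤ ∑ i, |v i| * δ := by
            refine Finset.sum_le_sum fun i _ => ?_
            rw [abs_mul]
            refine mul_le_mul_of_nonneg_left ?_ (abs_nonneg _)
            rw [abs_sub_comm]
            exact le_of_lt (hqr i)
        _ = (∑ i, |v i|) * δ := by rw [Finset.sum_mul]
        _ ≤ M * δ := mul_le_mul_of_nonneg_right hvM (le_of_lt hδ)
    have hMδ : M * δ < u := by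
      have h1 : (0:ℝ) < M + 1 := by linarith
      rw [hδdef, ← mul_div_assoc, div_lt_iff₀ h1]
      nlinarith
    have hsplit : ∑ i, v i * (qr i : ℝ)
        = ∑ i, v i * y0 i + ∑ i, v i * ((qr i : ℝ) - y0 i) := by
      rw [← Finset.sum_add_distrib]
      exact Finset.sum_congr rfl fun i _ => by ring
    have := hvy v hv
    have habs := abs_le.1 hbd
    rw [hsplit]
    linarith [habs.1]
  obtain ⟨N, hN, hmm⟩ := rat_clear qr
  choose mz hmz using hmm
  refine ⟨mz, fun v hv => ?_⟩
  have hNpos : (0 : ℝ) < N := by exact_mod_cast hN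
  have hpos' : 0 < (∑ i, v i * (qr i : ℝ)) * N := mul_pos (key v hv) hNpos
  have : ∑ i, v i * (mz i : ℝ) = (∑ i, v i * (qr i : ℝ)) * N := by
    rw [Finset.sum_mul]
    refine Finset.sum_congr rfl fun i _ => ?_
    have h1 : ((mz i : ℤ) : ℝ) = (qr i : ℝ) * N := by exact_mod_cast congrArg (Rat.cast : ℚ → ℝ) (hmz i)
    rw [h1]; ring
  rw [this]
  exact hpos'

end Aux


/-- Existence of a strictly positive integral functional for a positive affine semigroup. -/
lemma exists_good_u {n : ℕ} (Γ : Set (V n)) (hpos : IsPositive Γ)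
    (hdisc : IsDiscreteSet (diffSet Γ)) (S : Finset (V n))
    (hS : (AddSubmonoid.closure (S : Set (V n)) : Set (V n)) = Γ) :
    ∃ u0 : V n, u0 ∈ Submodule.span ℝ (diffSet Γ) ∧
      (∀ v ∈ diffSet Γ, ∃ m : ℤ, u0 ⬝ᵥ v = (m : ℝ)) ∧
      (∀ s ∈ S, 0 ≤ s ⬝ᵥ u0) ∧ (∀ s ∈ S, s ≠ 0 → 1 ≤ s ⬝ᵥ u0) := by
  classical
  have hmemΓ : ∀ x : V n, x ∈ Γ ↔ x ∈ AddSubmonoid.closure (S : Set (V n)) := by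
    intro x; rw [← hS]; exact Iff.rfl
  have hΓ0 : (0 : V n) ∈ Γ := (hmemΓ 0).2 (AddSubmonoid.zero_mem _)
  have hΓadd : ∀ x ∈ Γ, ∀ y ∈ Γ, x + y ∈ Γ := fun x hx y hy =>
    (hmemΓ _).2 (AddSubmonoid.add_mem _ ((hmemΓ _).1 hx) ((hmemΓ _).1 hy))
  have hSΓ : ∀ s ∈ S, s ∈ Γ := fun s hs => (hmemΓ _).2 (AddSubmonoid.subset_closure hs)
  have hΓΛ : ∀ v ∈ Γ, v ∈ diffSet Γ := fun v hv => ⟨v, hv, 0, hΓ0, (sub_zero v).symm⟩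
  set Λ : Set (V n) := diffSet Γ with hΛdef
  have hΛ0 : (0 : V n) ∈ Λ := hΓΛ 0 hΓ0
  have hΛadd : ∀ x ∈ Λ, ∀ y ∈ Λ, x + y ∈ Λ := by
    rintro _ ⟨a, ha, b, hb, rfl⟩ _ ⟨c, hc, d, hd, rfl⟩
    exact ⟨a + c, hΓadd a ha c hc, b + d, hΓadd b hb d hd, by abel⟩
  have hΛneg : ∀ x ∈ Λ, -x ∈ Λ := by
    rintro _ ⟨a, ha, b, hb, rfl⟩
    exact ⟨b, hb, a, ha, by abel⟩
  let ΛG : AddSubgroup (V n) :=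
    { carrier := Λ
      zero_mem' := hΛ0
      add_mem' := fun hx hy => hΛadd _ hx _ hy
      neg_mem' := fun hx => hΛneg _ hx }
  let ΛZ : Submodule ℤ (V n) := AddSubgroup.toIntSubmodule ΛG
  set W : Submodule ℝ (V n) := Submodule.span ℝ Λ with hWdef
  have hΛW : Λ ⊆ (W : Set (V n)) := Submodule.subset_span
  let L : Submodule ℤ ↥W := ΛZ.comap ((W.subtype).restrictScalars ℤ)
  have hmemL : ∀ x : ↥W, x ∈ L ↔ (x : V n) ∈ Λ := fun x => Iff.rfl
  haveI : DiscreteTopology ↥L := by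
    rw [discreteTopology_iff_isOpen_singleton]
    intro x
    rw [Metric.isOpen_singleton_iff]
    obtain ⟨ε, hε, h⟩ := hdisc ((x : ↥W) : V n) ((hmemL _).1 x.2)
    refine ⟨ε, hε, fun y hy => ?_⟩
    have hyx : ((y : ↥W) : V n) = ((x : ↥W) : V n) := by
      refine h _ ((hmemL _).1 y.2) ?_
      rwa [Subtype.dist_eq, Subtype.dist_eq] at hy
    exact Subtype.ext (Subtype.ext hyx)
  haveI : IsZLattice ℝ L := by
    refine ⟨?_⟩
    apply Submodule.map_injective_of_injective W.injective_subtype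
    rw [Submodule.map_span, Submodule.map_top, Submodule.range_subtype]
    have himg : (W.subtype '' (L : Set ↥W)) = Λ := by
      ext v
      constructor
      · rintro ⟨x, hx, rfl⟩
        exact (hmemL _).1 hx
      · intro hv
        exact ⟨⟨v, hΛW hv⟩, (hmemL _).2 hv, rfl⟩
    rw [himg]
  haveI := ZLattice.module_finite ℝ L
  haveI := ZLattice.module_free ℝ L
  let b : Module.Basis (Module.Free.ChooseBasisIndex ℤ ↥L) ℤ ↥L := Module.Free.chooseBasis ℤ ↥L
  -- a dual family for the basis `b.ofZLatticeBasis ℝ L` with respect to the dot product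
  let pair : ↥W →ₗ[ℝ] Module.Dual ℝ ↥W :=
    LinearMap.mk₂ ℝ (fun x y : ↥W => (x : V n) ⬝ᵥ (y : V n))
      (fun m₁ m₂ y => by simp [add_dotProduct])
      (fun c m y => by simp [smul_dotProduct, smul_eq_mul])
      (fun m y₁ y₂ => by simp [dotProduct_add])
      (fun c m y => by simp [dotProduct_smul, smul_eq_mul])
  have hker : ∀ x : ↥W, pair x = 0 → x = 0 := by
    intro x hx
    have h1 : (x : V n) ⬝ᵥ (x : V n) = 0 := by
      have := congrFun (congrArg DFunLike.coe hx) x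
      simpa [pair] using this
    exact Subtype.ext (dotProduct_self_eq_zero.1 h1)
  have hpairinj : Function.Injective pair :=
    LinearMap.ker_eq_bot.1 (LinearMap.ker_eq_bot'.2 hker)
  have hpairsurj : Function.Surjective pair :=
    (LinearMap.injective_iff_surjective_of_finrank_eq_finrank
      Subspace.dual_finrank_eq.symm).1 hpairinj
  have hdual : ∀ i, ∃ wv : ↥W, ∀ y : ↥W,
      (y : V n) ⬝ᵥ (wv : V n) = (b.ofZLatticeBasis ℝ L).repr y i := by
    intro i
    obtain ⟨wv, hwv⟩ := hpairsurj ((b.ofZLatticeBasis ℝ L).coord i)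
    refine ⟨wv, fun y => ?_⟩
    have h : pair wv y = (b.ofZLatticeBasis ℝ L).repr y i := by
      rw [← Module.Basis.coord_apply]
      exact LinearMap.congr_fun hwv y
    calc (y : V n) ⬝ᵥ (wv : V n) = (wv : V n) ⬝ᵥ (y : V n) := dotProduct_comm _ _
      _ = (b.ofZLatticeBasis ℝ L).repr y i := h
  choose uu huu using hdual
  have hWdot : ∀ (y : ↥W) i, (y : V n) ⬝ᵥ (uu i : V n) = (b.ofZLatticeBasis ℝ L).repr y i :=
    fun y i => huu i y
  have hreprInt : ∀ (v : V n) (hv : v ∈ Λ) i,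
      v ⬝ᵥ (uu i : V n) = ((b.repr ⟨⟨v, hΛW hv⟩, (hmemL _).2 hv⟩ i : ℤ) : ℝ) := by
    intro v hv i
    have h1 := hWdot ⟨v, hΛW hv⟩ i
    have h2 := b.ofZLatticeBasis_repr_apply ℝ (L := L) ⟨⟨v, hΛW hv⟩, (hmemL _).2 hv⟩ i
    exact h1.trans h2
  -- the set of coordinate vectors of the nonzero generators
  set zR : V n → (Module.Free.ChooseBasisIndex ℤ ↥L) → ℝ :=
    fun s i => s ⬝ᵥ (uu i : V n) with hzRdef
  set T' : Finset (V n) := S.filter (fun s => s ≠ 0) with hT'def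
  have hT'S : ∀ s ∈ T', s ∈ S ∧ s ≠ 0 := fun s hs => Finset.mem_filter.1 hs
  have hT'Γ : ∀ s ∈ T', s ∈ Γ := fun s hs => hSΓ s (hT'S s hs).1
  have hT'Λ : ∀ s ∈ T', s ∈ Λ := fun s hs => hΓΛ s (hT'Γ s hs)
  have hinjT' : Set.InjOn zR ↑T' := by
    intro s hs s' hs' hzz
    have h1 : ((⟨s, hΛW (hT'Λ s hs)⟩ : ↥W) : V n) = s := rfl
    have heq : (b.ofZLatticeBasis ℝ L).repr ⟨s, hΛW (hT'Λ s hs)⟩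
        = (b.ofZLatticeBasis ℝ L).repr ⟨s', hΛW (hT'Λ s' hs')⟩ := by
      refine Finsupp.ext fun i => ?_
      rw [← hWdot, ← hWdot]
      exact congrFun hzz i
    have := (b.ofZLatticeBasis ℝ L).repr.injective heq
    exact congrArg Subtype.val this
  set TR : Finset ((Module.Free.ChooseBasisIndex ℤ ↥L) → ℝ) := T'.image zR with hTRdef
  have hint : ∀ x ∈ TR, ∀ i, ∃ m : ℤ, x i = (m : ℝ) := by
    intro x hx i
    obtain ⟨s, hs, rfl⟩ := Finset.mem_image.1 hx
    exact ⟨b.repr ⟨⟨s, hΛW (hT'Λ s hs)⟩, (hmemL _).2 (hT'Λ s hs)⟩ i,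
      hreprInt s (hT'Λ s hs) i⟩
  have hrel : ∀ c : ((Module.Free.ChooseBasisIndex ℤ ↥L) → ℝ) → ℕ,
      ∑ x ∈ TR, (c x : ℝ) • x = 0 → ∀ x ∈ TR, c x = 0 := by
    intro c hc
    rw [Finset.sum_image (fun s hs s' hs' h => hinjT' hs hs' h)] at hc
    have hyW : (∑ s ∈ T', (c (zR s) : ℝ) • s) ∈ W :=
      Submodule.sum_mem _ fun s hs => Submodule.smul_mem _ _ (hΛW (hT'Λ s hs))
    have hy0 : (∑ s ∈ T', (c (zR s) : ℝ) • s) = 0 := by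
      have hrepr : ∀ i, (b.ofZLatticeBasis ℝ L).repr ⟨_, hyW⟩ i = 0 := by
        intro i
        rw [← hWdot ⟨_, hyW⟩ i]
        show (∑ s ∈ T', (c (zR s) : ℝ) • s) ⬝ᵥ (uu i : V n) = 0
        rw [dotProduct_comm, dot_sum_smul]
        have h1 := congrFun hc i
        simp only [Finset.sum_apply, Pi.smul_apply, smul_eq_mul, Pi.zero_apply] at h1
        rw [← h1]
        refine Finset.sum_congr rfl fun s _ => ?_
        exact congrArg (fun r => ((c (zR s) : ℕ) : ℝ) * r) (dotProduct_comm _ _)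
      have hre : (b.ofZLatticeBasis ℝ L).repr ⟨_, hyW⟩ = 0 :=
        Finsupp.ext fun i => by rw [hrepr i]; rfl
      have hW0 : (⟨_, hyW⟩ : ↥W) = 0 := (LinearEquiv.map_eq_zero_iff _).1 hre
      simpa using congrArg Subtype.val hW0
    intro x hx
    by_contra hcx
    obtain ⟨s0, hs0, rfl⟩ := Finset.mem_image.1 hx
    have hsum' : (c (zR s0) : ℝ) • s0 + ∑ s ∈ T'.erase s0, (c (zR s) : ℝ) • s = 0 := by
      rw [Finset.add_sum_erase T' (fun s => (c (zR s) : ℝ) • s) hs0]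
      exact hy0
    have hnsmul : ∀ (k : ℕ) (v), v ∈ Γ → (k : ℝ) • v ∈ Γ := by
      intro k v hv
      rw [Nat.cast_smul_eq_nsmul]
      exact (hmemΓ _).2 (nsmul_mem ((hmemΓ _).1 hv) k)
    have hA : (c (zR s0) : ℝ) • s0 ∈ Γ := hnsmul _ _ (hT'Γ s0 hs0)
    have hBsum : ∑ s ∈ T'.erase s0, (c (zR s) : ℝ) • s = -((c (zR s0) : ℝ) • s0) :=
      eq_neg_of_add_eq_zero_right hsum'
    have hB : -((c (zR s0) : ℝ) • s0) ∈ Γ := by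
      rw [← hBsum]
      exact (hmemΓ _).2 (sum_mem fun s hs => (hmemΓ _).1
        (hnsmul _ _ (hT'Γ s (Finset.mem_of_mem_erase hs))))
    have h0 : (c (zR s0) : ℝ) • s0 = 0 := hpos _ hA hB
    have hs0ne : s0 ≠ 0 := (hT'S s0 hs0).2
    rcases smul_eq_zero.1 h0 with h | h
    · exact hcx (by exact_mod_cast h)
    · exact hs0ne h
  obtain ⟨cz, hcz⟩ := gordan TR hint hrel
  set u0 : V n := ∑ i, (cz i : ℝ) • (uu i : V n) with hu0def
  have hu0W : u0 ∈ W := Submodule.sum_mem _ fun i _ => Submodule.smul_mem _ _ (uu i).2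
  have hu0dot : ∀ x : V n, x ⬝ᵥ u0 = ∑ i, (cz i : ℝ) * (x ⬝ᵥ (uu i : V n)) := by
    intro x
    rw [hu0def]
    exact dot_sum_smul _ x _ _
  have hu0int : ∀ v ∈ Λ, ∃ m : ℤ, u0 ⬝ᵥ v = (m : ℝ) := by
    intro v hv
    refine ⟨∑ i, cz i * b.repr ⟨⟨v, hΛW hv⟩, (hmemL _).2 hv⟩ i, ?_⟩
    rw [dotProduct_comm, hu0dot v]
    push_cast
    exact Finset.sum_congr rfl fun i _ => by rw [hreprInt v hv i]
  have hu0one : ∀ s ∈ S, s ≠ 0 → 1 ≤ s ⬝ᵥ u0 := by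
    intro s hs hne
    have hsT' : s ∈ T' := Finset.mem_filter.2 ⟨hs, hne⟩
    have hposs : 0 < s ⬝ᵥ u0 := by
      have h1 := hcz (zR s) (Finset.mem_image_of_mem zR hsT')
      have h2 : s ⬝ᵥ u0 = ∑ i, zR s i * (cz i : ℝ) := by
        rw [hu0dot s]
        exact Finset.sum_congr rfl fun i _ => mul_comm _ _
      rw [h2]
      exact h1
    obtain ⟨m, hm⟩ := hu0int s (hT'Λ s hsT')
    rw [dotProduct_comm] at hm
    rw [hm] at hposs ⊢
    have : (0 : ℤ) < m := by exact_mod_cast hposs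
    exact_mod_cast this
  have hu0nn : ∀ s ∈ S, 0 ≤ s ⬝ᵥ u0 := by
    intro s hs
    rcases eq_or_ne s 0 with rfl | hne
    · rw [zero_dotProduct]
    · exact le_trans zero_le_one (hu0one s hs hne)
  exact ⟨u0, hu0W, hu0int, hu0nn, hu0one⟩

/-- For a positive affine semigroup `Γ ⊆ ℝ^n`, the lattice generated by the
dual semigroup equals the dual lattice of `Λ_Γ`: `Λ_{Γ*} = (Λ_Γ)*`. -/
theorem diffSet_dualSemigroup_eq_dualLattice {n : ℕ} (Γ : Set (V n))
    (hΓ : IsAffineSemigroup Γ) (hpos : IsPositive Γ) :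
    diffSet (dualSemigroup Γ) = dualLattice (diffSet Γ) := by
  classical
  obtain ⟨⟨S, hS⟩, hdisc⟩ := hΓ
  have hmemΓ : ∀ x : V n, x ∈ Γ ↔ x ∈ AddSubmonoid.closure (S : Set (V n)) := by
    intro x; rw [← hS]; exact Iff.rfl
  have hΓ0 : (0 : V n) ∈ Γ := (hmemΓ 0).2 (AddSubmonoid.zero_mem _)
  have hSΓ : ∀ s ∈ S, s ∈ Γ := fun s hs => (hmemΓ _).2 (AddSubmonoid.subset_closure hs)
  have hdualcone : ∀ z : V n, (∀ s ∈ S, 0 ≤ s ⬝ᵥ z) → z ∈ dualCone (coneOf Γ) := by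
    intro z hz
    have hΓz : ∀ v ∈ Γ, 0 ≤ v ⬝ᵥ z := by
      intro v hv
      have hv' : v ∈ AddSubmonoid.closure (S : Set (V n)) := (hmemΓ _).1 hv
      clear hv
      induction hv' using AddSubmonoid.closure_induction with
      | mem x hx => exact hz x hx
      | zero =>
          rw [zero_dotProduct]
      | add x y hx hy ihx ihy =>
          rw [add_dotProduct]
          exact add_nonneg ihx ihy
    rintro x ⟨k, cs, vs, hcs, hvs, rfl⟩
    rw [dotProduct_comm, dot_sum_smul]
    refine Finset.sum_nonneg fun i _ => mul_nonneg (hcs i) ?_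
    rw [dotProduct_comm]
    exact hΓz _ (hvs i)
  ext w
  constructor
  · rintro ⟨x, hx, y, hy, rfl⟩
    obtain ⟨hxl, _⟩ := hx
    obtain ⟨hyl, _⟩ := hy
    refine ⟨Submodule.sub_mem _ hxl.1 hyl.1, fun v hv => ?_⟩
    obtain ⟨m1, h1⟩ := hxl.2 v hv
    obtain ⟨m2, h2⟩ := hyl.2 v hv
    refine ⟨m1 - m2, ?_⟩
    rw [sub_dotProduct, h1, h2]
    push_cast
    ring
  · intro hw
    obtain ⟨u0, hu0W, hu0int, hu0nn, hu0one⟩ := exists_good_u Γ hpos hdisc S hS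
    obtain ⟨N, hN⟩ := exists_nat_ge (∑ s ∈ S, |s ⬝ᵥ w|)
    have hSnn2 : ∀ s ∈ S, 0 ≤ s ⬝ᵥ ((N : ℝ) • u0) := by
      intro s hs
      rw [dotProduct_smul, smul_eq_mul]
      exact mul_nonneg (Nat.cast_nonneg N) (hu0nn s hs)
    have hSnn1 : ∀ s ∈ S, 0 ≤ s ⬝ᵥ (w + (N : ℝ) • u0) := by
      intro s hs
      rcases eq_or_ne s 0 with rfl | hne
      · rw [zero_dotProduct]
      · have habs : |s ⬝ᵥ w| ≤ (N : ℝ) :=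
          le_trans (Finset.single_le_sum (f := fun s => |s ⬝ᵥ w|)
            (fun i _ => abs_nonneg _) hs) hN
        have h1 := hu0one s hs hne
        have hexp : s ⬝ᵥ (w + (N : ℝ) • u0) = s ⬝ᵥ w + (N : ℝ) * (s ⬝ᵥ u0) := by
          rw [dotProduct_add, dotProduct_smul, smul_eq_mul]
        have h2 := abs_le.1 habs
        have h3 : (N : ℝ) * 1 ≤ (N : ℝ) * (s ⬝ᵥ u0) :=
          mul_le_mul_of_nonneg_left h1 (Nat.cast_nonneg N)
        rw [hexp]
        linarith [h2.1]
    have ht2lat : ((N : ℝ) • u0) ∈ dualLattice (diffSet Γ) := by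
      refine ⟨Submodule.smul_mem _ _ hu0W, fun v hv => ?_⟩
      obtain ⟨m, hm⟩ := hu0int v hv
      refine ⟨N * m, ?_⟩
      rw [smul_dotProduct, smul_eq_mul, hm]
      push_cast
      ring
    have ht1lat : (w + (N : ℝ) • u0) ∈ dualLattice (diffSet Γ) := by
      refine ⟨Submodule.add_mem _ hw.1 ht2lat.1, fun v hv => ?_⟩
      obtain ⟨m1, h1⟩ := hw.2 v hv
      obtain ⟨m2, h2⟩ := ht2lat.2 v hv
      refine ⟨m1 + m2, ?_⟩
      rw [add_dotProduct, h1, h2]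
      push_cast
      ring
    refine ⟨w + (N : ℝ) • u0, ⟨ht1lat, hdualcone _ hSnn1⟩,
      (N : ℝ) • u0, ⟨ht2lat, hdualcone _ hSnn2⟩, ?_⟩
    abel

end
end

section
/- Let Γ ⊆ ℝ^n be a positive affine semigroup with minimal generating set a₁,…,a_k, let b₁,…,b_l be the minimal generating set of Γ*, and let S ∈ ℤ₊^{k×l} be the slack matrix of Γ. Then the map φ sending Σᵢ nᵢ aᵢ to Σᵢ nᵢ Sᵢ (where Sᵢ is the i-th row of S and nᵢ ∈ ℤ₊) is a well-defined additive monoid isomorphism from Γ onto Γ_S^row; analogously, the map sending Σⱼ mⱼ bⱼ to Σⱼ mⱼ (j-th column of S) is a well-defined additive monoid isomorphism from Γ* onto Γ_S^col. -/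
open Matrix BigOperators

noncomputable section

-- helpers
section Helpers
variable {n k : ℕ}

lemma sum_dotProduct' {m : Type*} [Fintype m] (f : m → V n) (w : V n) :
    (∑ i, f i) ⬝ᵥ w = ∑ i, f i ⬝ᵥ w := by
  simp [dotProduct, Finset.sum_apply, Finset.sum_mul]
  exact Finset.sum_comm

lemma dotProduct_sum' {m : Type*} [Fintype m] (w : V n) (f : m → V n) :
    w ⬝ᵥ (∑ i, f i) = ∑ i, w ⬝ᵥ f i := by
  simp [dotProduct, Finset.sum_apply, Finset.mul_sum]
  exact Finset.sum_comm

lemma combos_subset_closure (a : Fin k → V n) (c : Fin k → ℕ) :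
    (∑ i, (c i : ℝ) • a i) ∈ AddSubmonoid.closure (Set.range a) := by
  have h1 : (∑ i, c i • a i) ∈ AddSubmonoid.closure (Set.range a) :=
    AddSubmonoid.sum_mem _ fun i _ =>
      AddSubmonoid.nsmul_mem (S := AddSubmonoid.closure (Set.range a))
        (AddSubmonoid.subset_closure (Set.mem_range_self i)) (c i)
  have h2 : ∑ i, (c i : ℝ) • a i = ∑ i, c i • a i := by
    refine Finset.sum_congr rfl fun i _ => ?_
    exact Nat.cast_smul_eq_nsmul ℝ (c i) (a i)
  rw [h2]
  exact h1

lemma closure_eq_combos (a : Fin k → V n) :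
    (AddSubmonoid.closure (Set.range a) : Set (V n)) =
      {x | ∃ c : Fin k → ℕ, x = ∑ i, (c i : ℝ) • a i} := by
  apply Set.Subset.antisymm
  · intro x hx
    induction hx using AddSubmonoid.closure_induction with
    | mem x hx =>
      obtain ⟨i, rfl⟩ := hx
      refine ⟨Pi.single i 1, ?_⟩
      simp [Pi.single_apply, ite_smul]
    | zero => exact ⟨0, by simp⟩
    | add x y _ _ hx hy =>
      obtain ⟨c, rfl⟩ := hx
      obtain ⟨d, rfl⟩ := hy
      exact ⟨c + d, by simp [add_smul, Finset.sum_add_distrib]⟩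
  · rintro x ⟨c, rfl⟩
    exact combos_subset_closure a c

lemma mem_of_combo {Γ : Set (V n)} {a : Fin k → V n} (hgen : IsGenSet (Set.range a) Γ)
    (c : Fin k → ℕ) : (∑ i, (c i : ℝ) • a i) ∈ Γ := hgen ▸ combos_subset_closure a c

lemma rep_of_mem {Γ : Set (V n)} {a : Fin k → V n} (hgen : IsGenSet (Set.range a) Γ)
    {x : V n} (hx : x ∈ Γ) : ∃ c : Fin k → ℕ, x = ∑ i, (c i : ℝ) • a i := by
  rw [← hgen] at hx
  rw [closure_eq_combos] at hx
  exact hx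

lemma minGen_not_zero {A Γ : Set (V n)} (h : IsMinGenSet A Γ) : (0 : V n) ∉ A := by
  intro h0
  refine h.2 (A \ {0}) ((Set.ssubset_iff_of_subset Set.diff_subset).mpr ⟨0, h0, by simp⟩) ?_
  have : AddSubmonoid.closure (A \ {0}) = AddSubmonoid.closure A := by
    refine le_antisymm (AddSubmonoid.closure_mono Set.diff_subset) ?_
    refine AddSubmonoid.closure_le.mpr fun x hx => ?_
    by_cases hx0 : x = 0
    · subst hx0; exact AddSubmonoid.zero_mem _
    · exact AddSubmonoid.subset_closure ⟨hx, hx0⟩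
  unfold IsGenSet
  rw [this]
  exact h.1

lemma zero_mem_of_gen {Γ : Set (V n)} {a : Fin k → V n} (hgen : IsGenSet (Set.range a) Γ) :
    (0 : V n) ∈ Γ := by
  have := mem_of_combo hgen 0
  simpa using this

end Helpers


section Pointed
variable {n k : ℕ}

lemma pointed_aux {Γ : Set (V n)} (hdisc : IsDiscreteSet (diffSet Γ))
    (hpos : IsPositive Γ) {a : Fin k → V n} (hgen : IsMinGenSet (Set.range a) Γ)
    {ι : Type*} [Fintype ι] (w : ι → ℝ) (z : ι → V n)
    (h0 : ∀ i, 0 ≤ w i) (h1 : ∑ i, w i = 1) (hzr : ∀ i, z i ∈ Set.range a)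
    (hz : ∑ i, w i • z i = 0) : False := by
  have hΓ0 : (0 : V n) ∈ Γ := zero_mem_of_gen hgen.1
  have hzΓ : ∀ i, z i ∈ AddSubmonoid.closure (Set.range a) := fun i =>
    AddSubmonoid.subset_closure (hzr i)
  -- the approximating sequence
  set g : ℕ → V n := fun N => ∑ i, (⌊(N : ℝ) * w i⌋₊ : ℝ) • z i with hg
  have hgΓ : ∀ N, g N ∈ Γ := by
    intro N
    rw [← hgen.1]
    have h2 : g N = ∑ i, ⌊(N : ℝ) * w i⌋₊ • z i := by
      refine Finset.sum_congr rfl fun i _ => ?_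
      exact Nat.cast_smul_eq_nsmul ℝ _ _
    rw [h2]
    exact AddSubmonoid.sum_mem _ fun i _ =>
      AddSubmonoid.nsmul_mem (S := AddSubmonoid.closure (Set.range a)) (hzΓ i) _
  obtain ⟨i0, hi0⟩ : ∃ i0, 0 < w i0 := by
    by_contra hcon
    push_neg at hcon
    have : ∑ i, w i ≤ 0 := Finset.sum_nonpos fun i _ => hcon i
    rw [h1] at this; linarith
  -- boundedness
  set C : ℝ := ∑ i, ‖z i‖ with hCdef
  have hfl : ∀ (x : ℝ), 0 ≤ x → |(⌊x⌋₊ : ℝ) - x| ≤ 1 := by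
    intro x hx
    have h1' := Nat.floor_le hx
    have h2' := Nat.sub_one_lt_floor x
    rw [abs_le]; constructor <;> linarith
  have hbound : ∀ N, ‖g N‖ ≤ C := by
    intro N
    have e1 : ∑ i, ((N : ℝ) * w i) • z i = 0 := by
      have : ∑ i, ((N : ℝ) * w i) • z i = (N : ℝ) • ∑ i, w i • z i := by
        rw [Finset.smul_sum]
        exact Finset.sum_congr rfl fun i _ => by rw [smul_smul]
      rw [this, hz, smul_zero]
    have e2 : g N = ∑ i, ((⌊(N : ℝ) * w i⌋₊ : ℝ) - (N : ℝ) * w i) • z i := by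
      rw [hg]
      simp only [sub_smul, Finset.sum_sub_distrib, e1, sub_zero]
    rw [e2]
    calc ‖∑ i, ((⌊(N : ℝ) * w i⌋₊ : ℝ) - (N : ℝ) * w i) • z i‖
        ≤ ∑ i, ‖((⌊(N : ℝ) * w i⌋₊ : ℝ) - (N : ℝ) * w i) • z i‖ := norm_sum_le _ _
      _ ≤ ∑ i, ‖z i‖ := by
          refine Finset.sum_le_sum fun i _ => ?_
          rw [norm_smul, Real.norm_eq_abs]
          have := hfl ((N : ℝ) * w i) (mul_nonneg (Nat.cast_nonneg N) (h0 i))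
          calc |(⌊(N : ℝ) * w i⌋₊ : ℝ) - (N : ℝ) * w i| * ‖z i‖
              ≤ 1 * ‖z i‖ := by
                exact mul_le_mul_of_nonneg_right this (norm_nonneg _)
            _ = ‖z i‖ := one_mul _
  -- Bolzano-Weierstrass
  have hmem : ∀ N, g N ∈ Metric.closedBall (0 : V n) C := by
    intro N
    rw [Metric.mem_closedBall, dist_zero_right]
    exact hbound N
  obtain ⟨p, -, φ, hφ, htd⟩ :=
    tendsto_subseq_of_bounded (Metric.isBounded_closedBall (x := (0 : V n)) (r := C)) hmem
  obtain ⟨ε, hε, hεp⟩ := hdisc 0 ⟨0, hΓ0, 0, hΓ0, by simp⟩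
  have hcs := htd.cauchySeq
  rw [Metric.cauchySeq_iff] at hcs
  obtain ⟨K, hK⟩ := hcs ε hε
  set B : ℕ := ⌈(2 : ℝ) / w i0⌉₊ with hBdef
  set k2 : ℕ := max K (φ K + B) with hk2def
  have hk2K : K ≤ k2 := le_max_left _ _
  have hφk2 : φ K + B ≤ φ k2 := le_trans (le_max_right _ _) (hφ.le_apply)
  have hdist : dist (g (φ k2)) (g (φ K)) < ε := hK k2 hk2K K (le_refl K)
  have hgg : g (φ k2) = g (φ K) := by
    have hy : g (φ k2) - g (φ K) ∈ diffSet Γ := ⟨_, hgΓ _, _, hgΓ _, rfl⟩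
    have : g (φ k2) - g (φ K) = 0 := by
      refine hεp _ hy ?_
      rw [dist_zero_right, ← dist_eq_norm]
      exact hdist
    exact sub_eq_zero.mp this
  set N : ℕ := φ K with hNdef
  set N' : ℕ := φ k2 with hN'def
  have hNN' : N + B ≤ N' := hφk2
  have hmono : ∀ i, ⌊(N : ℝ) * w i⌋₊ ≤ ⌊(N' : ℝ) * w i⌋₊ := by
    intro i
    refine Nat.floor_mono ?_
    have : (N : ℝ) ≤ (N' : ℝ) := by exact_mod_cast le_trans (Nat.le_add_right _ _) hNN'
    exact mul_le_mul_of_nonneg_right this (h0 i)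
  set d : ι → ℕ := fun i => ⌊(N' : ℝ) * w i⌋₊ - ⌊(N : ℝ) * w i⌋₊ with hddef
  have hsum0 : ∑ i, (d i : ℝ) • z i = 0 := by
    have : ∀ i, (d i : ℝ) = (⌊(N' : ℝ) * w i⌋₊ : ℝ) - (⌊(N : ℝ) * w i⌋₊ : ℝ) := by
      intro i; rw [hddef]; push_cast [Nat.cast_sub (hmono i)]; ring
    calc ∑ i, (d i : ℝ) • z i
        = ∑ i, ((⌊(N' : ℝ) * w i⌋₊ : ℝ) - (⌊(N : ℝ) * w i⌋₊ : ℝ)) • z i := by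
          exact Finset.sum_congr rfl fun i _ => by rw [this i]
      _ = g N' - g N := by simp only [sub_smul, Finset.sum_sub_distrib, hg]
      _ = 0 := by rw [hN'def, hNdef, hgg, sub_self]
  have hd : 1 ≤ d i0 := by
    have hBw : (2 : ℝ) ≤ (B : ℝ) * w i0 := by
      have := Nat.le_ceil ((2 : ℝ) / w i0)
      rw [div_le_iff₀ hi0] at this
      exact this
    have hlt : ⌊(N : ℝ) * w i0⌋₊ < ⌊(N' : ℝ) * w i0⌋₊ := by
      have h1' : (⌊(N : ℝ) * w i0⌋₊ : ℝ) ≤ (N : ℝ) * w i0 := Nat.floor_le (by positivity)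
      have h2' : (N' : ℝ) * w i0 - 1 < (⌊(N' : ℝ) * w i0⌋₊ : ℝ) := Nat.sub_one_lt_floor _
      have h3' : (N : ℝ) * w i0 + 2 ≤ (N' : ℝ) * w i0 := by
        have hc : ((N + B : ℕ) : ℝ) ≤ (N' : ℝ) := by exact_mod_cast hNN'
        push_cast at hc
        nlinarith [h0 i0]
      have : (⌊(N : ℝ) * w i0⌋₊ : ℝ) < (⌊(N' : ℝ) * w i0⌋₊ : ℝ) := by linarith
      exact_mod_cast this
    have hdeq : d i0 = ⌊(N' : ℝ) * w i0⌋₊ - ⌊(N : ℝ) * w i0⌋₊ := rfl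
    omega
  -- split the relation
  classical
  set c1 : ι → ℕ := fun i => if i = i0 then d i else 0 with hc1
  set c2 : ι → ℕ := fun i => if i = i0 then 0 else d i with hc2
  have hx1 : ∑ i, (c1 i : ℝ) • z i = (d i0 : ℝ) • z i0 := by
    rw [hc1]
    simp [ite_smul, Finset.sum_ite_eq]
  have hsplit : ∑ i, (c1 i : ℝ) • z i + ∑ i, (c2 i : ℝ) • z i = 0 := by
    rw [← Finset.sum_add_distrib]
    have : ∀ i, (c1 i : ℝ) • z i + (c2 i : ℝ) • z i = (d i : ℝ) • z i := by
      intro i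
      by_cases h : i = i0 <;> simp [hc1, hc2, h]
    rw [Finset.sum_congr rfl fun i _ => this i]
    exact hsum0
  have hmemC : ∀ c : ι → ℕ, ∑ i, (c i : ℝ) • z i ∈ Γ := by
    intro c
    rw [← hgen.1]
    have h2 : ∑ i, (c i : ℝ) • z i = ∑ i, c i • z i := by
      refine Finset.sum_congr rfl fun i _ => ?_
      exact Nat.cast_smul_eq_nsmul ℝ _ _
    rw [h2]
    exact AddSubmonoid.sum_mem _ fun i _ =>
      AddSubmonoid.nsmul_mem (S := AddSubmonoid.closure (Set.range a)) (hzΓ i) _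
  have hxΓ : ∑ i, (c1 i : ℝ) • z i ∈ Γ := hmemC c1
  have hnegΓ : -(∑ i, (c1 i : ℝ) • z i) ∈ Γ := by
    rw [neg_eq_of_add_eq_zero_right hsplit]
    exact hmemC c2
  have hx0 := hpos _ hxΓ hnegΓ
  rw [hx1] at hx0
  rcases smul_eq_zero.mp hx0 with h | h
  · have : d i0 ≠ 0 := by omega
    exact this (by exact_mod_cast h)
  · obtain ⟨j, hj⟩ := hzr i0
    exact minGen_not_zero hgen ⟨j, by rw [hj, h]⟩

lemma exists_pos_dual (hk : 0 < k) {Γ : Set (V n)} (hdisc : IsDiscreteSet (diffSet Γ))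
    (hpos : IsPositive Γ) {a : Fin k → V n} (hgen : IsMinGenSet (Set.range a) Γ) :
    ∃ w : V n, ∀ i, 0 < a i ⬝ᵥ w := by
  set Eu := EuclideanSpace ℝ (Fin n) with hEu
  set T : V n ≃ₗ[ℝ] Eu := (WithLp.linearEquiv 2 ℝ (Fin n → ℝ)).symm with hT
  set a' : Fin k → Eu := fun i => T (a i) with ha'
  set C : Set Eu := convexHull ℝ (Set.range a') with hC
  have h0C : (0 : Eu) ∉ C := by
    intro hmem
    rw [hC, mem_convexHull_iff_exists_fintype] at hmem
    obtain ⟨ι, _, w, z, hw0, hw1, hzs, hzsum⟩ := hmem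
    refine pointed_aux hdisc hpos hgen w (fun i => T.symm (z i)) hw0 hw1 ?_ ?_
    · intro i
      obtain ⟨j, hj⟩ := hzs i
      refine ⟨j, ?_⟩
      show a j = T.symm (z i)
      rw [← hj, ha']
      simp
    · have := congrArg T.symm hzsum
      simpa [map_sum, _root_.map_smul] using this
  have hCne : C.Nonempty := ⟨a' ⟨0, hk⟩, subset_convexHull ℝ _ (Set.mem_range_self _)⟩
  have hconv : Convex ℝ C := convex_convexHull ℝ _
  have hcomp : IsCompact C := (Set.finite_range a').isCompact_convexHull ℝ
  obtain ⟨v, hvC, hv⟩ :=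
    exists_norm_eq_iInf_of_complete_convex hCne hcomp.isClosed.isComplete hconv 0
  rw [norm_eq_iInf_iff_real_inner_le_zero hconv hvC] at hv
  have hvne : v ≠ 0 := fun h => h0C (h ▸ hvC)
  have hself : 0 < (inner ℝ v v : ℝ) := by
    rw [real_inner_self_eq_norm_sq]
    exact pow_pos (norm_pos_iff.mpr hvne) 2
  have hkey : ∀ x ∈ C, (inner ℝ v v : ℝ) ≤ (inner ℝ v x : ℝ) := by
    intro x hx
    have h' := hv x hx
    rw [zero_sub, inner_neg_left, inner_sub_right] at h'
    linarith
  refine ⟨T.symm v, fun i => ?_⟩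
  have h1 : a i ⬝ᵥ T.symm v = (inner ℝ (a' i) v : ℝ) := by
    rw [PiLp.inner_apply]
    simp only [RCLike.inner_apply, conj_trivial]
    exact Finset.sum_congr rfl fun x _ => mul_comm _ _
  rw [h1, real_inner_comm]
  exact lt_of_lt_of_le hself (hkey _ (subset_convexHull ℝ _ (Set.mem_range_self i)))

end Pointed


set_option maxHeartbeats 1000000 in
set_option synthInstance.maxHeartbeats 400000 in
lemma key_inj {n k : ℕ} {Γ : Set (V n)} (hdisc : IsDiscreteSet (diffSet Γ))
    (hpos : IsPositive Γ) {a : Fin k → V n} (hagen : IsMinGenSet (Set.range a) Γ) :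
    ∀ x ∈ Γ, ∀ y ∈ Γ, (∀ γ ∈ dualSemigroup Γ, x ⬝ᵥ γ = y ⬝ᵥ γ) → x = y := by
  rcases Nat.eq_zero_or_pos k with hk0 | hk
  · subst hk0
    intro x hx y hy _
    obtain ⟨c, rfl⟩ := rep_of_mem hagen.1 hx
    obtain ⟨c', rfl⟩ := rep_of_mem hagen.1 hy
    simp
  classical
  -- setup
  have hΓ0 : (0 : V n) ∈ Γ := zero_mem_of_gen hagen.1
  have haiΓ : ∀ i, a i ∈ Γ := by
    intro i
    have := mem_of_combo hagen.1 (Pi.single i 1)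
    simpa [Pi.single_apply, ite_smul] using this
  have hΓadd : ∀ u ∈ Γ, ∀ v ∈ Γ, u + v ∈ Γ := by
    intro u hu v hv
    obtain ⟨c, rfl⟩ := rep_of_mem hagen.1 hu
    obtain ⟨c', rfl⟩ := rep_of_mem hagen.1 hv
    have := mem_of_combo hagen.1 (c + c')
    simpa [add_smul, Finset.sum_add_distrib] using this
  set W : Submodule ℝ (V n) := Submodule.span ℝ (Set.range a) with hWdef
  have haiW : ∀ i, a i ∈ W := fun i => Submodule.subset_span (Set.mem_range_self i)
  have hΓW : ∀ z ∈ Γ, z ∈ W := by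
    intro z hz
    obtain ⟨c, rfl⟩ := rep_of_mem hagen.1 hz
    exact Submodule.sum_mem _ fun i _ => Submodule.smul_mem _ _ (haiW i)
  have hdW : ∀ z ∈ diffSet Γ, z ∈ W := by
    rintro z ⟨u, hu, v, hv, rfl⟩
    exact Submodule.sub_mem _ (hΓW u hu) (hΓW v hv)
  have hspan : Submodule.span ℝ (diffSet Γ) = W := by
    refine le_antisymm (Submodule.span_le.mpr hdW) ?_
    rw [hWdef]
    refine Submodule.span_le.mpr ?_
    rintro z ⟨i, rfl⟩
    exact Submodule.subset_span ⟨a i, haiΓ i, 0, hΓ0, by simp⟩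
  set G : AddSubgroup (V n) :=
    { carrier := diffSet Γ
      zero_mem' := ⟨0, hΓ0, 0, hΓ0, by simp⟩
      add_mem' := by
        rintro p q ⟨x1, hx1, y1, hy1, rfl⟩ ⟨x2, hx2, y2, hy2, rfl⟩
        exact ⟨x1 + x2, hΓadd _ hx1 _ hx2, y1 + y2, hΓadd _ hy1 _ hy2, by abel⟩
      neg_mem' := by
        rintro p ⟨x1, hx1, y1, hy1, rfl⟩
        exact ⟨y1, hy1, x1, hx1, by abel⟩ } with hGdef
  set L' : Submodule ℤ ↥W :=
    (AddSubgroup.toIntSubmodule G).comap ((W.subtype).restrictScalars ℤ) with hL'def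
  have hL'mem : ∀ v : ↥W, v ∈ L' ↔ (v : V n) ∈ diffSet Γ := by
    intro v
    constructor
    · intro h; exact h
    · intro h; exact h
  haveI hdisc' : DiscreteTopology ↥L' := by
    rw [discreteTopology_iff_isOpen_singleton]
    intro x
    rw [Metric.isOpen_singleton_iff]
    obtain ⟨ε, hε, hεp⟩ := hdisc ((x : ↥W) : V n) ((hL'mem _).mp x.2)
    refine ⟨ε, hε, fun y hy => ?_⟩
    have hd : dist (((y : ↥W) : V n)) (((x : ↥W) : V n)) < ε := by
      rw [← Subtype.dist_eq, ← Subtype.dist_eq]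
      exact hy
    have := hεp _ ((hL'mem _).mp y.2) hd
    exact Subtype.ext (Subtype.ext this)
  haveI hzl : IsZLattice ℝ L' := by
    refine ⟨?_⟩
    have himg : W.subtype '' (L' : Set ↥W) = diffSet Γ := by
      ext z
      constructor
      · rintro ⟨w, hw, rfl⟩
        exact (hL'mem _).mp hw
      · intro hz
        exact ⟨⟨z, hdW z hz⟩, (hL'mem _).mpr hz, rfl⟩
    have h1 : Submodule.map W.subtype (Submodule.span ℝ (L' : Set ↥W)) =
        Submodule.span ℝ (diffSet Γ) := by
      rw [Submodule.map_span, himg]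
    have h2 : Submodule.map W.subtype (⊤ : Submodule ℝ ↥W) = W := by
      rw [Submodule.map_top, Submodule.range_subtype]
    apply Submodule.map_injective_of_injective W.injective_subtype
    rw [h1, h2, hspan]
  haveI hfin : Module.Finite ℤ ↥L' := ZLattice.module_finite ℝ L'
  haveI hfree : Module.Free ℤ ↥L' := ZLattice.module_free ℝ L'
  set ι := Module.Free.ChooseBasisIndex ℤ ↥L' with hι
  haveI : Fintype ι := Module.Free.ChooseBasisIndex.fintype ℤ ↥L'
  set bZ : Module.Basis ι ℤ ↥L' := Module.Free.chooseBasis ℤ ↥L' with hbZ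
  set β : Module.Basis ι ℝ ↥W := bZ.ofZLatticeBasis ℝ L' with hβ
  set e : ι → V n := fun i => ((β i : ↥W) : V n) with he
  have hcoe : ∀ v : ↥W, (v : V n) = ∑ i, β.repr v i • e i := by
    intro v
    conv_lhs => rw [← β.sum_repr v]
    rw [he]
    push_cast
    rfl
  have hWdot : ∀ (u : V n), (∀ i, e i ⬝ᵥ u = 0) → ∀ w : ↥W, (w : V n) ⬝ᵥ u = 0 := by
    intro u hu w
    rw [hcoe w, sum_dotProduct']
    simp [smul_dotProduct, hu]
  set f : ↥W →ₗ[ℝ] (ι → ℝ) :=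
    { toFun := fun w => fun i => e i ⬝ᵥ (w : V n)
      map_add' := by
        intro u v
        funext i
        simp [dotProduct_add]
      map_smul' := by
        intro c u
        funext i
        simp [dotProduct_smul] } with hf
  have hfinj : Function.Injective f := by
    rw [injective_iff_map_eq_zero f]
    intro w hw
    have h0 : (w : V n) ⬝ᵥ (w : V n) = 0 :=
      hWdot (w : V n) (fun i => congrFun hw i) w
    have h1 : (w : V n) = 0 := dotProduct_self_eq_zero.mp h0
    exact Subtype.ext h1
  have hfr : Module.finrank ℝ ↥W = Module.finrank ℝ (ι → ℝ) := by
    rw [Module.finrank_eq_card_basis β, Module.finrank_fintype_fun_eq_card]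
  have hfsurj : Function.Surjective f :=
    (LinearMap.injective_iff_surjective_of_finrank_eq_finrank hfr).mp hfinj
  set estar : ι → V n := fun j => ((Classical.choose (hfsurj (Pi.single j 1)) : ↥W) : V n)
    with hestardef
  have hestarW : ∀ j, estar j ∈ W := fun j => (Classical.choose (hfsurj (Pi.single j 1))).2
  have hestar : ∀ i j, e i ⬝ᵥ estar j = if i = j then 1 else 0 := by
    intro i j
    have hspec := Classical.choose_spec (hfsurj (Pi.single j 1))
    have h2 := congrFun hspec i
    rw [Pi.single_apply] at h2
    exact h2
  -- integer coordinates of the generators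
  have haiL : ∀ i, (⟨a i, haiW i⟩ : ↥W) ∈ L' := by
    intro i
    exact (hL'mem _).mpr ⟨a i, haiΓ i, 0, hΓ0, by simp⟩
  set aL : Fin k → ↥L' := fun i => ⟨⟨a i, haiW i⟩, haiL i⟩ with haL
  set m : Fin k → ι → ℤ := fun i j => bZ.repr (aL i) j with hm
  have hrepr : ∀ i j, β.repr ⟨a i, haiW i⟩ j = (m i j : ℝ) := by
    intro i j
    rw [hβ, hm]
    exact Module.Basis.ofZLatticeBasis_repr_apply ℝ L' bZ (aL i) j
  have hai_e : ∀ i, a i = ∑ j, (m i j : ℝ) • e j := by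
    intro i
    have h1 := hcoe ⟨a i, haiW i⟩
    simp only [hrepr] at h1
    exact h1
  have hdotm : ∀ i j, a i ⬝ᵥ estar j = (m i j : ℝ) := by
    intro i j
    rw [hai_e i, sum_dotProduct']
    simp [smul_dotProduct, hestar, mul_ite, Finset.sum_ite_eq']
  -- positive integer functional
  obtain ⟨w₀, hw₀⟩ := exists_pos_dual hk hdisc hpos hagen
  set r : ι → ℝ := fun t => e t ⬝ᵥ w₀ with hr
  have hraw : ∀ i, a i ⬝ᵥ w₀ = ∑ t, (m i t : ℝ) * r t := by
    intro i
    rw [hai_e i, sum_dotProduct']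
    simp [smul_dotProduct, hr, smul_eq_mul]
  set ci : Fin k → ℝ := fun i => ∑ t, |(m i t : ℝ)| with hci
  have hD : ∀ i, ∃ Di : ℕ, ci i / (a i ⬝ᵥ w₀) < Di := fun i => exists_nat_gt _
  choose Df hDf using hD
  set D : ℕ := Finset.univ.sup Df with hDdef
  have hDp : ∀ i, ci i < (D : ℝ) * (a i ⬝ᵥ w₀) := by
    intro i
    have h1 : Df i ≤ D := Finset.le_sup (Finset.mem_univ i)
    have h2 : (Df i : ℝ) ≤ (D : ℝ) := by exact_mod_cast h1
    have h3 : ci i / (a i ⬝ᵥ w₀) < (D : ℝ) := lt_of_lt_of_le (hDf i) h2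
    rwa [div_lt_iff₀ (hw₀ i)] at h3
  set z : ι → ℤ := fun t => ⌊(D : ℝ) * r t⌋ with hz
  set s : Fin k → ℤ := fun i => ∑ t, m i t * z t with hs
  have hzr : ∀ t, |(z t : ℝ) - (D : ℝ) * r t| ≤ 1 := by
    intro t
    have h1 := Int.floor_le ((D : ℝ) * r t)
    have h2 := Int.sub_one_lt_floor ((D : ℝ) * r t)
    rw [hz, abs_le]
    constructor <;> simp <;> linarith
  have hsx : ∀ i, (1 : ℤ) ≤ s i := by
    intro i
    have hterm : ∀ t, (m i t : ℝ) * ((D : ℝ) * r t) - |(m i t : ℝ)| ≤ (m i t : ℝ) * (z t : ℝ) := by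
      intro t
      have h1 := hzr t
      have h2 : |(m i t : ℝ) * ((z t : ℝ) - (D : ℝ) * r t)| ≤ |(m i t : ℝ)| := by
        rw [abs_mul]
        calc |(m i t : ℝ)| * |(z t : ℝ) - (D : ℝ) * r t| ≤ |(m i t : ℝ)| * 1 :=
              mul_le_mul_of_nonneg_left h1 (abs_nonneg _)
          _ = |(m i t : ℝ)| := mul_one _
      have h3 := neg_abs_le ((m i t : ℝ) * ((z t : ℝ) - (D : ℝ) * r t))
      nlinarith [h2, h3]
    have hsum : (D : ℝ) * (a i ⬝ᵥ w₀) - ci i ≤ (s i : ℝ) := by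
      have h4 : (s i : ℝ) = ∑ t, (m i t : ℝ) * (z t : ℝ) := by
        rw [hs]; push_cast; ring_nf
      rw [h4, hci]
      have h5 : ∑ t, ((m i t : ℝ) * ((D : ℝ) * r t) - |(m i t : ℝ)|) ≤
          ∑ t, (m i t : ℝ) * (z t : ℝ) := Finset.sum_le_sum fun t _ => hterm t
      calc (D : ℝ) * (a i ⬝ᵥ w₀) - ∑ t, |(m i t : ℝ)|
          = ∑ t, ((m i t : ℝ) * ((D : ℝ) * r t) - |(m i t : ℝ)|) := by
            rw [Finset.sum_sub_distrib, hraw i, Finset.mul_sum]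
            congr 1
            exact Finset.sum_congr rfl fun t _ => by ring
        _ ≤ ∑ t, (m i t : ℝ) * (z t : ℝ) := h5
      done
    have hpos' : (0 : ℝ) < (s i : ℝ) := by
      have := hDp i
      linarith
    have hzlt : (0 : ℤ) < s i := by exact_mod_cast hpos'
    omega
  set wpr : V n := ∑ t, (z t : ℝ) • estar t with hwpr
  have hwprW : wpr ∈ W := Submodule.sum_mem _ fun t _ => Submodule.smul_mem _ _ (hestarW t)
  have hadot_wpr : ∀ i, a i ⬝ᵥ wpr = (s i : ℝ) := by
    intro i
    rw [hwpr, dotProduct_sum']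
    have : ∀ t, a i ⬝ᵥ ((z t : ℝ) • estar t) = (m i t : ℝ) * (z t : ℝ) := by
      intro t
      rw [dotProduct_smul, hdotm, smul_eq_mul]
      ring
    rw [Finset.sum_congr rfl fun t _ => this t, hs]
    push_cast
    ring_nf
  set N : ℕ := Finset.univ.sup (fun p : Fin k × ι => (-(m p.1 p.2)).toNat) with hN
  have hNineq : ∀ i j, (0 : ℤ) ≤ N * s i + m i j := by
    intro i j
    have h1 : -(m i j) ≤ ((-(m i j)).toNat : ℤ) := Int.self_le_toNat _
    have h2 : ((-(m i j)).toNat : ℤ) ≤ (N : ℤ) := by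
      have := Finset.le_sup (f := fun p : Fin k × ι => (-(m p.1 p.2)).toNat)
        (Finset.mem_univ (i, j))
      exact_mod_cast this
    have h3 : (N : ℤ) * 1 ≤ (N : ℤ) * s i :=
      mul_le_mul_of_nonneg_left (hsx i) (by positivity)
    linarith
  -- dual membership helper
  have hΓdot : ∀ (u : V n), (∀ i, 0 ≤ a i ⬝ᵥ u) → ∀ v ∈ Γ, 0 ≤ v ⬝ᵥ u := by
    intro u hnn v hv
    obtain ⟨c, rfl⟩ := rep_of_mem hagen.1 hv
    rw [sum_dotProduct']
    refine Finset.sum_nonneg fun i _ => ?_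
    rw [smul_dotProduct]
    exact smul_nonneg (by positivity) (hnn i)
  have hdual : ∀ u : V n, u ∈ W → (∀ i, ∃ q : ℤ, a i ⬝ᵥ u = (q : ℝ)) →
      (∀ i, 0 ≤ a i ⬝ᵥ u) → u ∈ dualSemigroup Γ := by
    intro u hu hint hnn
    constructor
    · constructor
      · rw [hspan]; exact hu
      · rintro v ⟨x1, hx1, y1, hy1, rfl⟩
        obtain ⟨c, rfl⟩ := rep_of_mem hagen.1 hx1
        obtain ⟨c', rfl⟩ := rep_of_mem hagen.1 hy1
        choose q hq using hint
        refine ⟨∑ i, (c i : ℤ) * q i - ∑ i, (c' i : ℤ) * q i, ?_⟩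
        rw [dotProduct_sub, dotProduct_sum', dotProduct_sum']
        have hterm : ∀ (c0 : Fin k → ℕ) (i : Fin k),
            u ⬝ᵥ ((c0 i : ℝ) • a i) = (c0 i : ℝ) * (q i : ℝ) := by
          intro c0 i
          rw [dotProduct_smul, smul_eq_mul, dotProduct_comm, hq i]
        rw [Finset.sum_congr rfl fun i _ => hterm c i,
          Finset.sum_congr rfl fun i _ => hterm c' i]
        push_cast
        ring
    · rintro x ⟨kk, cc, vv, hcc0, hvvΓ, rfl⟩
      rw [sum_dotProduct']
      refine Finset.sum_nonneg fun t _ => ?_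
      rw [smul_dotProduct]
      exact smul_nonneg (hcc0 t) (hΓdot u hnn _ (hvvΓ t))
  have hwpr_dual : wpr ∈ dualSemigroup Γ := by
    refine hdual wpr hwprW (fun i => ⟨s i, hadot_wpr i⟩) fun i => ?_
    rw [hadot_wpr i]
    have := hsx i
    exact_mod_cast le_trans zero_le_one (by exact_mod_cast this)
  have hg_dual : ∀ j, ((N : ℝ) • wpr + estar j) ∈ dualSemigroup Γ := by
    intro j
    have hval : ∀ i, a i ⬝ᵥ ((N : ℝ) • wpr + estar j) = ((N * s i + m i j : ℤ) : ℝ) := by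
      intro i
      rw [dotProduct_add, dotProduct_smul, hadot_wpr i, hdotm i j, smul_eq_mul]
      push_cast
      ring
    refine hdual _ (Submodule.add_mem _ (Submodule.smul_mem _ _ hwprW) (hestarW j))
      (fun i => ⟨N * s i + m i j, hval i⟩) fun i => ?_
    rw [hval i]
    exact_mod_cast hNineq i j
  -- conclude injectivity
  intro x hx y hy hxy
  have hest : ∀ j, x ⬝ᵥ estar j = y ⬝ᵥ estar j := by
    intro j
    have h1 := hxy wpr hwpr_dual
    have h2 := hxy _ (hg_dual j)
    rw [dotProduct_add, dotProduct_add, dotProduct_smul, dotProduct_smul, h1] at h2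
    exact add_left_cancel h2
  set zW : ↥W := ⟨x - y, Submodule.sub_mem _ (hΓW x hx) (hΓW y hy)⟩ with hzW
  have hcz : ∀ j, β.repr zW j = 0 := by
    intro j
    have h3 : (x - y) ⬝ᵥ estar j = 0 := by
      rw [sub_dotProduct, hest j, sub_self]
    have h4 : ((zW : ↥W) : V n) ⬝ᵥ estar j = β.repr zW j := by
      rw [hcoe zW, sum_dotProduct']
      simp [smul_dotProduct, hestar, mul_ite, Finset.sum_ite_eq']
    rw [← h4]
    exact h3
  have hz0 : zW = 0 := by
    have h5 : β.repr zW = 0 := by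
      ext j
      simp [hcz j]
    exact (LinearEquiv.map_eq_zero_iff β.repr).mp h5
  have h6 : x - y = 0 := by
    have := congrArg (fun (v : ↥W) => (v : V n)) hz0
    exact this
  exact sub_eq_zero.mp h6


/-- Let `Γ` be a positive affine semigroup with minimal generating set
`a₁,…,a_k`, let `b₁,…,b_l` be the minimal generating set of `Γ*`, and `S` the slack
matrix. Then the map sending `Σ nᵢ aᵢ ↦ Σ nᵢ Sᵢ` (rows of `S`) is a well-defined
additive monoid isomorphism of `Γ` onto `Γ_S^row`, and analogously the column map is a
well-defined additive monoid isomorphism of `Γ*` onto `Γ_S^col`. -/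
theorem slack_row_col_isomorphisms {n k l : ℕ} (Γ : Set (V n))
    (hΓ : IsAffineSemigroup Γ) (hpos : IsPositive Γ)
    (a : Fin k → V n) (b : Fin l → V n) (S : Matrix (Fin k) (Fin l) ℤ)
    (ha : Function.Injective a) (hb : Function.Injective b)
    (hagen : IsMinGenSet (Set.range a) Γ)
    (hbgen : IsMinGenSet (Set.range b) (dualSemigroup Γ))
    (hSab : ∀ i j, (S i j : ℝ) = a i ⬝ᵥ b j) :
    (∃ φ : V n → V l,
      (∀ c : Fin k → ℕ, φ (∑ i, (c i : ℝ) • a i) = ∑ i, (c i : ℝ) • rowVec S i) ∧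
      Set.BijOn φ Γ (GammaRow S) ∧
      (∀ x ∈ Γ, ∀ y ∈ Γ, φ (x + y) = φ x + φ y) ∧ φ 0 = 0) ∧
    (∃ ψ : V n → V k,
      (∀ c : Fin l → ℕ, ψ (∑ j, (c j : ℝ) • b j) = ∑ j, (c j : ℝ) • colVec S j) ∧
      Set.BijOn ψ (dualSemigroup Γ) (GammaCol S) ∧
      (∀ x ∈ dualSemigroup Γ, ∀ y ∈ dualSemigroup Γ, ψ (x + y) = ψ x + ψ y) ∧ ψ 0 = 0) := by
  constructor
  · -- row side
    set φ : V n → V l := fun x => fun j => x ⬝ᵥ b j with hφ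
    have hφf : ∀ c : Fin k → ℕ, φ (∑ i, (c i : ℝ) • a i) = ∑ i, (c i : ℝ) • rowVec S i := by
      intro c
      funext j
      show (∑ i, (c i : ℝ) • a i) ⬝ᵥ b j = _
      rw [sum_dotProduct']
      simp only [smul_dotProduct, smul_eq_mul, ← hSab, Finset.sum_apply, Pi.smul_apply, rowVec]
    refine ⟨φ, hφf, ⟨?_, ?_, ?_⟩, ?_, ?_⟩
    · -- MapsTo
      intro x hx
      obtain ⟨c, rfl⟩ := rep_of_mem hagen.1 hx
      exact ⟨c, (hφf c)⟩
    · -- InjOn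
      intro x hx y hy hxy
      refine key_inj hΓ.2 hpos hagen x hx y hy ?_
      intro γ hγ
      obtain ⟨c, rfl⟩ := rep_of_mem hbgen.1 hγ
      rw [dotProduct_sum', dotProduct_sum']
      refine Finset.sum_congr rfl fun j _ => ?_
      rw [dotProduct_smul, dotProduct_smul]
      have : x ⬝ᵥ b j = y ⬝ᵥ b j := congrFun hxy j
      rw [this]
    · -- SurjOn
      rintro u ⟨c, rfl⟩
      exact ⟨∑ i, (c i : ℝ) • a i, mem_of_combo hagen.1 c, hφf c⟩
    · intro x _ y _
      funext j
      show (x + y) ⬝ᵥ b j = x ⬝ᵥ b j + y ⬝ᵥ b j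
      rw [add_dotProduct]
    · funext j
      show (0 : V n) ⬝ᵥ b j = 0
      rw [zero_dotProduct]
  · -- column side
    set ψ : V n → V k := fun y => fun i => a i ⬝ᵥ y with hψ
    have hψf : ∀ c : Fin l → ℕ, ψ (∑ j, (c j : ℝ) • b j) = ∑ j, (c j : ℝ) • colVec S j := by
      intro c
      funext i
      show a i ⬝ᵥ (∑ j, (c j : ℝ) • b j) = _
      rw [dotProduct_sum']
      simp only [dotProduct_smul, smul_eq_mul, ← hSab, Finset.sum_apply, Pi.smul_apply, colVec]
    refine ⟨ψ, hψf, ⟨?_, ?_, ?_⟩, ?_, ?_⟩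
    · intro y hy
      obtain ⟨c, rfl⟩ := rep_of_mem hbgen.1 hy
      exact ⟨c, (hψf c)⟩
    · -- InjOn
      intro y hy y' hy' hyy
      have hspanW : Submodule.span ℝ (diffSet Γ) ≤ Submodule.span ℝ (Set.range a) := by
        refine Submodule.span_le.mpr ?_
        rintro z ⟨u, hu, v, hv, rfl⟩
        have hmem : ∀ w ∈ Γ, w ∈ Submodule.span ℝ (Set.range a) := by
          intro w hw
          obtain ⟨c, rfl⟩ := rep_of_mem hagen.1 hw
          exact Submodule.sum_mem _ fun i _ =>
            Submodule.smul_mem _ _ (Submodule.subset_span (Set.mem_range_self i))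
        exact Submodule.sub_mem _ (hmem u hu) (hmem v hv)
      have hz : ∀ i, a i ⬝ᵥ (y - y') = 0 := by
        intro i
        rw [dotProduct_sub]
        have : a i ⬝ᵥ y = a i ⬝ᵥ y' := congrFun hyy i
        rw [this, sub_self]
      set F : V n →ₗ[ℝ] ℝ :=
        { toFun := fun w => w ⬝ᵥ (y - y')
          map_add' := fun u v => add_dotProduct u v _
          map_smul' := fun c u => by simp [smul_dotProduct]; ring } with hF
      have hker : Submodule.span ℝ (Set.range a) ≤ LinearMap.ker F := by
        refine Submodule.span_le.mpr ?_
        rintro w ⟨i, rfl⟩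
        exact LinearMap.mem_ker.mpr (hz i)
      have hyW : y - y' ∈ Submodule.span ℝ (diffSet Γ) :=
        Submodule.sub_mem _ hy.1.1 hy'.1.1
      have hF0 : F (y - y') = 0 := hker (hspanW hyW)
      have : (y - y') ⬝ᵥ (y - y') = 0 := hF0
      have h6 := dotProduct_self_eq_zero.mp this
      exact sub_eq_zero.mp h6
    · rintro u ⟨c, rfl⟩
      exact ⟨∑ j, (c j : ℝ) • b j, mem_of_combo hbgen.1 c, hψf c⟩
    · intro x _ y _
      funext i
      show a i ⬝ᵥ (x + y) = a i ⬝ᵥ x + a i ⬝ᵥ y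
      rw [dotProduct_add]
    · funext i
      show a i ⬝ᵥ (0 : V n) = 0
      rw [dotProduct_zero]

end
end

section
/- Let Γ be a positive affine semigroup with slack matrix S ∈ ℤ₊^{k×l}. Then the lattice generated by the rows of S satisfies Λ_S^row = ℤ^l ∩ Row(S), and the lattice generated by the columns of S satisfies Λ_S^col = ℤ^k ∩ Col(S). -/
set_option maxHeartbeats 1000000
set_option synthInstance.maxHeartbeats 400000


open Matrix BigOperators

noncomputable section

/-! ### Auxiliary material for STATEMENT 4 -/

namespace SlackAux4

open Finset

lemma coe_sum_W {n : ℕ} (W : Submodule ℝ (V n)) {κ : Type*} (s : Finset κ) (f : κ → W) :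
    ((∑ i ∈ s, f i : W) : V n) = ∑ i ∈ s, (f i : V n) :=
  map_sum W.subtype f s

lemma coe_zsmul_W {n : ℕ} (W : Submodule ℝ (V n)) (c : ℤ) (x : W) :
    (((c • x) : W) : V n) = (c : ℝ) • (x : V n) := by
  rw [SetLike.val_smul_of_tower]
  exact (Int.cast_smul_eq_zsmul ℝ c _).symm

lemma dot_sum_left {N : ℕ} {κ : Type*} [Fintype κ] (c : κ → ℝ) (v : κ → V N) (w : V N) :
    (∑ i, c i • v i) ⬝ᵥ w = ∑ i, c i * (v i ⬝ᵥ w) := by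
  simp only [dotProduct, Finset.sum_apply, Pi.smul_apply, smul_eq_mul, Finset.sum_mul,
    Finset.mul_sum]
  rw [Finset.sum_comm]
  exact Finset.sum_congr rfl fun i _ => Finset.sum_congr rfl fun j _ => by ring

lemma dot_sum_right {N : ℕ} {κ : Type*} [Fintype κ] (c : κ → ℝ) (v : κ → V N) (w : V N) :
    w ⬝ᵥ (∑ i, c i • v i) = ∑ i, c i * (w ⬝ᵥ v i) := by
  simp only [dotProduct, Finset.sum_apply, Pi.smul_apply, smul_eq_mul, Finset.sum_mul,
    Finset.mul_sum]
  rw [Finset.sum_comm]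
  exact Finset.sum_congr rfl fun i _ => Finset.sum_congr rfl fun j _ => by ring

/-- Membership in the additive monoid closure of a finite family. -/
lemma natCombo_iff {n k : ℕ} (a : Fin k → V n) (x : V n) :
    x ∈ AddSubmonoid.closure (Set.range a) ↔ ∃ c : Fin k → ℕ, x = ∑ i, (c i : ℝ) • a i := by
  constructor
  · intro hx
    have hx' : x ∈ Submodule.span ℕ (Set.range a) := by
      rw [← Submodule.span_nat_eq_addSubmonoidClosure] at hx
      exact (Submodule.mem_toAddSubmonoid _ _).mp hx
    obtain ⟨c, hc⟩ := (Submodule.mem_span_range_iff_exists_fun ℕ).mp hx'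
    refine ⟨c, ?_⟩
    rw [← hc]
    exact Finset.sum_congr rfl fun i _ => (Nat.cast_smul_eq_nsmul ℝ _ _).symm
  · rintro ⟨c, rfl⟩
    refine AddSubmonoid.sum_mem _ fun i _ => ?_
    have h1 : ((c i : ℕ) : ℝ) • a i = (c i) • a i := Nat.cast_smul_eq_nsmul ℝ (c i) (a i)
    rw [h1]
    have h2 : a i ∈ AddSubmonoid.closure (Set.range a) :=
      AddSubmonoid.subset_closure (Set.mem_range_self i)
    exact nsmul_mem h2 (c i)

/-- A minimal generating set does not contain `0`. -/
lemma zero_not_mem_minGenSet {n : ℕ} {A Γ : Set (V n)} (h : IsMinGenSet A Γ) : (0 : V n) ∉ A := by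
  intro h0
  have hne : A \ {0} ≠ A := by
    intro he
    have h1 : (0 : V n) ∈ A \ {0} := he.symm ▸ h0
    exact h1.2 rfl
  refine h.2 (A \ {0}) (lt_of_le_of_ne Set.diff_subset hne) ?_
  have heq : AddSubmonoid.closure (A \ {0}) = AddSubmonoid.closure A := by
    refine le_antisymm (AddSubmonoid.closure_mono Set.diff_subset) ?_
    rw [AddSubmonoid.closure_le]
    intro x hx
    rcases eq_or_ne x 0 with rfl | hne'
    · exact AddSubmonoid.zero_mem _
    · exact AddSubmonoid.subset_closure ⟨hx, hne'⟩
  unfold IsGenSet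
  rw [heq]
  exact h.1

/-- Dirichlet pigeonhole: a real convex dependency `0 ∈ conv{m i}` among integer vectors
yields a nontrivial nonnegative integer dependency. -/
lemma dirichlet {k : ℕ} {ι : Type} [Fintype ι] (m : Fin k → ι → ℤ)
    (h : (0 : ι → ℝ) ∈ convexHull ℝ (Set.range fun i => fun t => (m i t : ℝ))) :
    ∃ (ν : Fin k → ℕ) (i0 : Fin k), 0 < ν i0 ∧ ∑ i, (ν i : ℤ) • m i = 0 := by
  classical
  rw [_root_.convexHull_eq] at h
  obtain ⟨κ, t, w, z, hw0, hw1, hz, hcm⟩ := h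
  rw [Finset.centerMass_eq_of_sum_1 _ _ hw1] at hcm
  have htne : t.Nonempty := by
    rcases Finset.eq_empty_or_nonempty t with rfl | hne
    · simp at hw1
    · exact hne
  have hidx : ∀ j : {x // x ∈ t}, ∃ i : Fin k, (fun s => (m i s : ℝ)) = z j.1 := fun j => hz j.1 j.2
  choose idx hidxz using hidx
  set T := t.card with hT
  have hTpos : 0 < T := Finset.card_pos.mpr htne
  have hTR : (0 : ℝ) < T := by exact_mod_cast hTpos
  have hsum' : ∑ j ∈ t.attach, w j.1 = 1 := by rw [Finset.sum_attach]; exact hw1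
  have hsumconst : ∑ _j ∈ t.attach, (1 / (T : ℝ)) = 1 := by
    rw [Finset.sum_const, Finset.card_attach, nsmul_eq_mul]
    field_simp
    rfl
  obtain ⟨j0, hj0mem, hj0⟩ := Finset.exists_le_of_sum_le (f := fun _ => (1:ℝ)/T)
    (g := fun j => w j.1) (Finset.attach_nonempty_iff.mpr htne)
    (by rw [hsum']; exact le_of_eq hsumconst)
  set u : ℕ → ι → ℤ := fun N s => ∑ j ∈ t.attach, ⌊(N : ℝ) * w j.1⌋ * m (idx j) s with hu
  have hzrange : ∀ (j : {x // x ∈ t}) (s : ι), z j.1 s = (m (idx j) s : ℝ) := fun j s =>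
    (congrFun (hidxz j) s).symm
  have hzero : ∀ s, ∑ j ∈ t.attach, w j.1 * (m (idx j) s : ℝ) = 0 := by
    intro s
    have h1 : ∑ j ∈ t, w j * z j s = 0 := by
      have h2 := congrFun hcm s
      simpa [Finset.sum_apply] using h2
    calc ∑ j ∈ t.attach, w j.1 * (m (idx j) s : ℝ)
        = ∑ j ∈ t.attach, w j.1 * z j.1 s :=
          Finset.sum_congr rfl fun j _ => by rw [hzrange]
      _ = ∑ j ∈ t, w j * z j s := Finset.sum_attach t (fun j => w j * z j s)
      _ = 0 := h1
  set B : ℤ := ∑ j ∈ t.attach, ∑ s, |m (idx j) s| with hB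
  have hbound : ∀ (N : ℕ) (s : ι), |u N s| ≤ B := by
    intro N s
    have habs : ∀ x : ℝ, |(⌊x⌋ : ℝ) - x| ≤ 1 := fun x =>
      abs_le.mpr ⟨by linarith [Int.sub_one_lt_floor x], by linarith [Int.floor_le x]⟩
    have hcast : ((u N s : ℤ) : ℝ)
        = ∑ j ∈ t.attach, (⌊(N : ℝ) * w j.1⌋ : ℝ) * (m (idx j) s : ℝ) := by
      rw [hu]; push_cast; ring
    have hsplit : ((u N s : ℤ) : ℝ)
        = ∑ j ∈ t.attach, ((⌊(N : ℝ) * w j.1⌋ : ℝ) - (N : ℝ) * w j.1) * (m (idx j) s : ℝ) := by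
      rw [hcast]
      rw [show (∑ j ∈ t.attach, (⌊(N : ℝ) * w j.1⌋ : ℝ) * (m (idx j) s : ℝ))
          = (∑ j ∈ t.attach, ((⌊(N : ℝ) * w j.1⌋ : ℝ) - (N : ℝ) * w j.1) * (m (idx j) s : ℝ))
            + (N : ℝ) * ∑ j ∈ t.attach, w j.1 * (m (idx j) s : ℝ) by
        rw [Finset.mul_sum, ← Finset.sum_add_distrib]
        exact Finset.sum_congr rfl fun j _ => by ring]
      rw [hzero]; ring
    have h3 : |((u N s : ℤ) : ℝ)| ≤ (B : ℝ) := by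
      rw [hsplit]
      refine (Finset.abs_sum_le_sum_abs _ _).trans ?_
      have h4 : ∀ j ∈ t.attach,
          |((⌊(N : ℝ) * w j.1⌋ : ℝ) - (N : ℝ) * w j.1) * (m (idx j) s : ℝ)|
          ≤ ((∑ s', |m (idx j) s'| : ℤ) : ℝ) := by
        intro j _
        rw [abs_mul]
        have h5 : |(m (idx j) s : ℝ)| ≤ ((∑ s', |m (idx j) s'| : ℤ) : ℝ) := by
          push_cast
          exact Finset.single_le_sum (f := fun s' => |(m (idx j) s' : ℝ)|)
            (fun s' _ => abs_nonneg _) (Finset.mem_univ s)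
        calc |(⌊(N : ℝ) * w j.1⌋ : ℝ) - (N : ℝ) * w j.1| * |(m (idx j) s : ℝ)|
            ≤ 1 * |(m (idx j) s : ℝ)| :=
              mul_le_mul_of_nonneg_right (habs _) (abs_nonneg _)
          _ = |(m (idx j) s : ℝ)| := one_mul _
          _ ≤ _ := h5
      refine (Finset.sum_le_sum h4).trans ?_
      rw [hB]
      push_cast
      exact le_refl _
    exact_mod_cast h3
  set F : Finset (ι → ℤ) := Finset.Icc (fun _ => -B) (fun _ => B) with hF
  have hmaps : ∀ r ∈ Finset.range (F.card + 1), u (r * T) ∈ F := by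
    intro r _
    rw [hF, Finset.mem_Icc]
    constructor
    · intro s; exact neg_le_of_abs_le (hbound _ s)
    · intro s; exact le_of_abs_le (hbound _ s)
  obtain ⟨r1, _, r2, _, hne, heq⟩ := Finset.exists_ne_map_eq_of_card_lt_of_maps_to
    (by rw [Finset.card_range]; omega) hmaps
  have main : ∀ r r' : ℕ, r < r' → u (r * T) = u (r' * T) →
      ∃ (ν : Fin k → ℕ) (i0 : Fin k), 0 < ν i0 ∧ ∑ i, (ν i : ℤ) • m i = 0 := by
    intro r r' hlt hequ
    set nj : {x // x ∈ t} → ℤ :=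
      fun j => ⌊((r' * T : ℕ) : ℝ) * w j.1⌋ - ⌊((r * T : ℕ) : ℝ) * w j.1⌋ with hnj
    have hmono : ∀ j : {x // x ∈ t}, ((r * T : ℕ) : ℝ) * w j.1 ≤ ((r' * T : ℕ) : ℝ) * w j.1 := by
      intro j
      apply mul_le_mul_of_nonneg_right _ (hw0 j.1 j.2)
      exact_mod_cast Nat.mul_le_mul_right T hlt.le
    have hnn : ∀ j : {x // x ∈ t}, 0 ≤ nj j := fun j =>
      sub_nonneg.mpr (Int.floor_le_floor (hmono j))
    have hpos : 1 ≤ nj j0 := by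
      have h6 : (T : ℝ) ≤ ((r' * T : ℕ) : ℝ) - ((r * T : ℕ) : ℝ) := by
        push_cast
        have h6a : (r : ℝ) + 1 ≤ r' := by exact_mod_cast hlt
        nlinarith [hTR.le]
      have h7 : 1 ≤ (T : ℝ) * w j0.1 := by
        calc (1:ℝ) = T * (1/T) := by field_simp
          _ ≤ T * w j0.1 := mul_le_mul_of_nonneg_left hj0 hTR.le
      have hge : ((r * T : ℕ) : ℝ) * w j0.1 + 1 ≤ ((r' * T : ℕ) : ℝ) * w j0.1 := by
        have hw0' : 0 ≤ w j0.1 := hw0 j0.1 j0.2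
        nlinarith [mul_le_mul_of_nonneg_right h6 hw0', h7]
      have h8 : ⌊((r * T : ℕ) : ℝ) * w j0.1⌋ + 1 ≤ ⌊((r' * T : ℕ) : ℝ) * w j0.1⌋ := by
        have h9 := Int.floor_le_floor hge
        rwa [show ((r * T : ℕ) : ℝ) * w j0.1 + 1
            = ((r * T : ℕ) : ℝ) * w j0.1 + ((1:ℤ) : ℝ) by push_cast; ring,
          Int.floor_add_intCast] at h9
      have h10 : nj j0 = ⌊((r' * T : ℕ) : ℝ) * w j0.1⌋ - ⌊((r * T : ℕ) : ℝ) * w j0.1⌋ := rfl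
      omega
    have hcomb : ∑ j ∈ t.attach, nj j • m (idx j) = 0 := by
      funext s
      have h9 := congrFun hequ s
      simp only [hu] at h9
      simp only [Finset.sum_apply, Pi.smul_apply, Pi.zero_apply, smul_eq_mul]
      rw [show ∑ j ∈ t.attach, nj j * m (idx j) s
          = (∑ j ∈ t.attach, ⌊((r' * T : ℕ) : ℝ) * w j.1⌋ * m (idx j) s)
            - ∑ j ∈ t.attach, ⌊((r * T : ℕ) : ℝ) * w j.1⌋ * m (idx j) s by
        rw [← Finset.sum_sub_distrib]
        exact Finset.sum_congr rfl fun j _ => by rw [hnj]; push_cast; ring]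
      rw [← h9]
      exact sub_self _
    refine ⟨fun i => ∑ j ∈ t.attach, if idx j = i then (nj j).toNat else 0, idx j0, ?_, ?_⟩
    · have h11 : 0 < (nj j0).toNat := by omega
      calc 0 < (nj j0).toNat := h11
        _ = (if idx j0 = idx j0 then (nj j0).toNat else 0) := (if_pos rfl).symm
        _ ≤ ∑ j ∈ t.attach, if idx j = idx j0 then (nj j).toNat else 0 :=
          Finset.single_le_sum (f := fun j => if idx j = idx j0 then (nj j).toNat else 0)
            (fun j _ => by positivity) (Finset.mem_attach t j0)
    · calc ∑ i, ((∑ j ∈ t.attach, if idx j = i then (nj j).toNat else 0 : ℕ) : ℤ) • m i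
          = ∑ i, ∑ j ∈ t.attach, (if idx j = i then ((nj j).toNat : ℤ) • m i else 0) := by
            refine Finset.sum_congr rfl fun i _ => ?_
            rw [show ((∑ j ∈ t.attach, if idx j = i then (nj j).toNat else 0 : ℕ) : ℤ)
                = ∑ j ∈ t.attach, (if idx j = i then ((nj j).toNat : ℤ) else 0) by
              rw [Nat.cast_sum]
              exact Finset.sum_congr rfl fun j _ => by split <;> simp]
            rw [Finset.sum_smul]
            exact Finset.sum_congr rfl fun j _ => by split <;> simp
        _ = ∑ j ∈ t.attach, ∑ i, (if idx j = i then ((nj j).toNat : ℤ) • m i else 0) :=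
            Finset.sum_comm
        _ = ∑ j ∈ t.attach, ((nj j).toNat : ℤ) • m (idx j) := by
            refine Finset.sum_congr rfl fun j _ => ?_
            rw [Finset.sum_ite_eq]
            simp
        _ = ∑ j ∈ t.attach, nj j • m (idx j) := by
            refine Finset.sum_congr rfl fun j _ => ?_
            rw [Int.toNat_of_nonneg (hnn j)]
        _ = 0 := hcomb
  rcases hne.lt_or_gt with hlt | hlt
  · exact main r1 r2 hlt heq
  · exact main r2 r1 hlt heq.symm

/-- Gordan-type separation with integer output. -/
lemma gordan {k : ℕ} {ι : Type} [Fintype ι] (m : Fin k → ι → ℤ)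
    (h : (0 : ι → ℝ) ∉ convexHull ℝ (Set.range fun i => fun t => (m i t : ℝ))) :
    ∃ c : ι → ℤ, ∀ i, 0 < ∑ t, (m i t : ℝ) * (c t : ℝ) := by
  classical
  set mR : Fin k → ι → ℝ := fun i t => (m i t : ℝ) with hmR
  have hfin : (Set.range mR).Finite := Set.finite_range _
  obtain ⟨φ, v, hv0, hvs⟩ := geometric_hahn_banach_point_closed
    (convex_convexHull ℝ _) (hfin.isCompact_convexHull (𝕜 := ℝ)).isClosed h
  have hv : 0 < v := by simpa using hv0
  set c0 : ι → ℝ := fun t => φ (fun j => if t = j then (1:ℝ) else 0) with hc0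
  have hφ : ∀ y : ι → ℝ, φ y = ∑ t, y t * c0 t := by
    intro y
    conv_lhs => rw [pi_eq_sum_univ y]
    rw [map_sum]
    exact Finset.sum_congr rfl fun t _ => by rw [_root_.map_smul, smul_eq_mul]
  have hstrict : ∀ i, v < ∑ t, mR i t * c0 t := by
    intro i
    rw [← hφ]
    exact hvs _ (subset_convexHull ℝ _ ⟨i, rfl⟩)
  set Bf : Fin k → ℝ := fun i => ∑ t, |mR i t| with hBf
  have hN : ∀ i, ∃ N : ℕ, Bf i ≤ N * v := by
    intro i
    obtain ⟨N, hNN⟩ := exists_nat_ge (Bf i / v)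
    refine ⟨N, ?_⟩
    rw [div_le_iff₀ hv] at hNN
    linarith
  choose Nf hNf using hN
  set N : ℕ := max 1 (Finset.univ.sup Nf) with hNdef
  have hN1 : (1 : ℝ) ≤ N := by
    have h1 : 1 ≤ N := le_max_left _ _
    exact_mod_cast h1
  have hNB : ∀ i, Bf i ≤ N * v := by
    intro i
    refine (hNf i).trans ?_
    have h1 : Nf i ≤ N := le_trans (Finset.le_sup (Finset.mem_univ i)) (le_max_right _ _)
    have h2 : (Nf i : ℝ) ≤ N := by exact_mod_cast h1
    nlinarith [hv.le]
  refine ⟨fun t => round ((2 * N : ℝ) * c0 t), ?_⟩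
  intro i
  set cZ : ι → ℤ := fun t => round ((2 * N : ℝ) * c0 t) with hcZ
  have hsplit : ∑ t, mR i t * (cZ t : ℝ)
      = (2 * N) * (∑ t, mR i t * c0 t) + ∑ t, mR i t * ((cZ t : ℝ) - (2 * N : ℝ) * c0 t) := by
    rw [Finset.mul_sum, ← Finset.sum_add_distrib]
    exact Finset.sum_congr rfl fun t _ => by ring
  have hE : |∑ t, mR i t * ((cZ t : ℝ) - (2 * N : ℝ) * c0 t)| ≤ Bf i / 2 := by
    refine (Finset.abs_sum_le_sum_abs _ _).trans ?_
    have h4 : ∀ t ∈ Finset.univ,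
        |mR i t * ((cZ t : ℝ) - (2 * N : ℝ) * c0 t)| ≤ |mR i t| * (1/2) := by
      intro t _
      rw [abs_mul]
      refine mul_le_mul_of_nonneg_left ?_ (abs_nonneg _)
      rw [abs_sub_comm, hcZ]
      exact abs_sub_round _
    refine (Finset.sum_le_sum h4).trans ?_
    rw [← Finset.sum_mul]
    exact le_of_eq (by rw [hBf]; ring)
  have hEub := abs_le.mp hE
  have hmain : (2 * (N:ℝ)) * v < (2 * N) * (∑ t, mR i t * c0 t) := by
    have h5 := hstrict i
    nlinarith [hN1]
  have hNv : 0 < (N : ℝ) * v := mul_pos (lt_of_lt_of_le zero_lt_one hN1) hv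
  have hBN := hNB i
  show 0 < ∑ t, mR i t * (cZ t : ℝ)
  rw [hsplit]
  nlinarith [hEub.1, hEub.2]

/-- The central duality lemma: vectors in the real span pairing integrally with the
generators of the dual (resp. primal) semigroup are integer combinations of the
primal (resp. dual) generators. -/
lemma key {n k l : ℕ} {Γ : Set (V n)} (hdisc : IsDiscreteSet (diffSet Γ))
    (hpos : IsPositive Γ) {a : Fin k → V n} {b : Fin l → V n}
    (ha : IsMinGenSet (Set.range a) Γ) (hb : IsMinGenSet (Set.range b) (dualSemigroup Γ)) :
    (∀ v ∈ Submodule.span ℝ (Set.range a), (∀ j, ∃ m : ℤ, v ⬝ᵥ b j = (m : ℝ)) →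
      ∃ c : Fin k → ℤ, v = ∑ i, (c i : ℝ) • a i) ∧
    (∀ w ∈ Submodule.span ℝ (Set.range b), (∀ i, ∃ m : ℤ, a i ⬝ᵥ w = (m : ℝ)) →
      ∃ c : Fin l → ℤ, w = ∑ j, (c j : ℝ) • b j) := by
  classical
  have haGen : (AddSubmonoid.closure (Set.range a) : Set (V n)) = Γ := ha.1
  have hbGen : (AddSubmonoid.closure (Set.range b) : Set (V n)) = dualSemigroup Γ := hb.1
  have memΓ : ∀ x, x ∈ Γ ↔ ∃ c : Fin k → ℕ, x = ∑ i, (c i : ℝ) • a i := by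
    intro x
    rw [← haGen]
    exact natCombo_iff a x
  have memDS : ∀ x, x ∈ dualSemigroup Γ ↔ ∃ c : Fin l → ℕ, x = ∑ j, (c j : ℝ) • b j := by
    intro x
    rw [← hbGen]
    exact natCombo_iff b x
  have aΓ : ∀ i, a i ∈ Γ := fun i => haGen ▸ AddSubmonoid.subset_closure ⟨i, rfl⟩
  have bDS : ∀ j, b j ∈ dualSemigroup Γ := fun j => hbGen ▸ AddSubmonoid.subset_closure ⟨j, rfl⟩
  have zeroΓ : (0 : V n) ∈ Γ := haGen ▸ (AddSubmonoid.closure (Set.range a)).zero_mem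
  have a0 : ∀ i, a i ≠ 0 := fun i hi => zero_not_mem_minGenSet ha ⟨i, hi⟩
  have diffChar : ∀ z, z ∈ diffSet Γ ↔ ∃ c : Fin k → ℤ, z = ∑ i, (c i : ℝ) • a i := by
    intro z
    constructor
    · rintro ⟨x, hx, y, hy, rfl⟩
      obtain ⟨cx, rfl⟩ := (memΓ x).mp hx
      obtain ⟨cy, rfl⟩ := (memΓ y).mp hy
      refine ⟨fun i => (cx i : ℤ) - (cy i : ℤ), ?_⟩
      rw [← Finset.sum_sub_distrib]
      refine Finset.sum_congr rfl fun i _ => ?_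
      push_cast
      rw [sub_smul]
    · rintro ⟨c, rfl⟩
      refine ⟨∑ i, (((c i).toNat : ℕ) : ℝ) • a i, (memΓ _).mpr ⟨_, rfl⟩,
        ∑ i, ((((-(c i)).toNat : ℕ)) : ℝ) • a i, (memΓ _).mpr ⟨_, rfl⟩, ?_⟩
      rw [← Finset.sum_sub_distrib]
      refine Finset.sum_congr rfl fun i _ => ?_
      rw [← sub_smul]
      congr 1
      have h1 := Int.toNat_sub_toNat_neg (c i)
      exact_mod_cast (congrArg (fun z : ℤ => (z : ℝ)) h1).symm
  set W : Submodule ℝ (V n) := Submodule.span ℝ (Set.range a) with hWdef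
  have haW : ∀ i, a i ∈ W := fun i => Submodule.subset_span ⟨i, rfl⟩
  set a' : Fin k → W := fun i => ⟨a i, haW i⟩ with ha'
  set L : Submodule ℤ W := Submodule.span ℤ (Set.range a') with hLdef
  have memL : ∀ x : W, x ∈ L ↔ ∃ c : Fin k → ℤ, (x : V n) = ∑ i, (c i : ℝ) • a i := by
    intro x
    rw [hLdef, Submodule.mem_span_range_iff_exists_fun]
    constructor
    · rintro ⟨c, hc⟩
      refine ⟨c, ?_⟩
      rw [← hc, coe_sum_W]
      exact Finset.sum_congr rfl fun i _ => coe_zsmul_W W (c i) (a' i)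
    · rintro ⟨c, hc⟩
      refine ⟨c, Subtype.ext ?_⟩
      rw [coe_sum_W, hc]
      exact Finset.sum_congr rfl fun i _ => coe_zsmul_W W (c i) (a' i)
  have diffL : ∀ z, z ∈ diffSet Γ ↔ ∃ x : W, x ∈ L ∧ (x : V n) = z := by
    intro z
    rw [diffChar]
    constructor
    · rintro ⟨c, rfl⟩
      have hzW : (∑ i, (c i : ℝ) • a i) ∈ W :=
        Submodule.sum_mem _ fun i _ => Submodule.smul_mem _ _ (haW i)
      exact ⟨⟨_, hzW⟩, (memL _).mpr ⟨c, rfl⟩, rfl⟩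
    · rintro ⟨x, hxL, rfl⟩
      exact (memL x).mp hxL
  have hspanDiff : Submodule.span ℝ (diffSet Γ) = W := by
    apply le_antisymm
    · rw [Submodule.span_le]
      intro z hz
      obtain ⟨x, _, rfl⟩ := (diffL z).mp hz
      exact x.2
    · rw [hWdef, Submodule.span_le]
      rintro z ⟨i, rfl⟩
      exact Submodule.subset_span ⟨a i, aΓ i, 0, zeroΓ, (sub_zero _).symm⟩
  haveI hLdisc : DiscreteTopology L := by
    rw [discreteTopology_iff_isOpen_singleton]
    intro x
    rw [Metric.isOpen_singleton_iff]
    have hxd : ((x : W) : V n) ∈ diffSet Γ := (diffL _).mpr ⟨x.1, x.2, rfl⟩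
    obtain ⟨ε, hε, hsep⟩ := hdisc _ hxd
    refine ⟨ε, hε, fun y hy => ?_⟩
    have hyd : ((y : W) : V n) ∈ diffSet Γ := (diffL _).mpr ⟨y.1, y.2, rfl⟩
    have hdd : dist y x = dist ((y : W) : V n) ((x : W) : V n) := rfl
    have h1 := hsep _ hyd (by rw [← hdd]; exact hy)
    exact Subtype.ext (Subtype.ext h1)
  haveI hZL : IsZLattice ℝ L := by
    refine ⟨?_⟩
    rw [eq_top_iff]
    rintro x -
    have hx : (x : V n) ∈ Submodule.span ℝ (Set.range a) := x.2
    obtain ⟨c, hc⟩ := (Submodule.mem_span_range_iff_exists_fun ℝ).mp hx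
    have hxe : x = ∑ i, c i • a' i := by
      apply Subtype.ext
      rw [coe_sum_W, ← hc]
      exact Finset.sum_congr rfl fun i _ => by rw [Submodule.coe_smul]
    rw [hxe]
    exact Submodule.sum_mem _ fun i _ => Submodule.smul_mem _ _
      (Submodule.subset_span (show a' i ∈ (L : Set W) from Submodule.subset_span ⟨i, rfl⟩))
  haveI hLfin : Module.Finite ℤ ↥L := ZLattice.module_finite ℝ L
  haveI hLfree : Module.Free ℤ ↥L := ZLattice.module_free ℝ L
  set eL : Module.Basis (Module.Free.ChooseBasisIndex ℤ ↥L) ℤ ↥L := Module.Free.chooseBasis ℤ ↥L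
    with heL
  set eW : Module.Basis (Module.Free.ChooseBasisIndex ℤ ↥L) ℝ ↥W := eL.ofZLatticeBasis ℝ L with heW
  set E : Module.Free.ChooseBasisIndex ℤ ↥L → V n := fun t => ((eW t : W) : V n) with hE
  have hEmem : ∀ t, (eW t : W) ∈ L := by
    intro t
    rw [heW, Module.Basis.ofZLatticeBasis_apply]
    exact (eL t).2
  have repr_coe : ∀ x : W, (x : V n) = ∑ t, (eW.repr x t) • E t := by
    intro x
    conv_lhs => rw [← Module.Basis.sum_repr eW x]
    rw [coe_sum_W]
    exact Finset.sum_congr rfl fun t _ => by rw [Submodule.coe_smul]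
  have reprL : ∀ (x : W) (hx : x ∈ L) t, eW.repr x t = ((eL.repr ⟨x, hx⟩ t : ℤ) : ℝ) := by
    intro x hx t
    rw [heW]
    exact Module.Basis.ofZLatticeBasis_repr_apply ℝ L eL ⟨x, hx⟩ t
  have Φdef : ∃ Φ : W →ₗ[ℝ] (Module.Free.ChooseBasisIndex ℤ ↥L → ℝ),
      ∀ (x : W) t, Φ x t = E t ⬝ᵥ (x : V n) := by
    refine ⟨{ toFun := fun x t => E t ⬝ᵥ (x : V n), map_add' := ?_, map_smul' := ?_ },
      fun x t => rfl⟩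
    · intro x y
      funext t
      simp [dotProduct_add]
    · intro r x
      funext t
      simp [dotProduct_smul]
  obtain ⟨Φ, hΦ⟩ := Φdef
  have Φinj : Function.Injective Φ := by
    refine (injective_iff_map_eq_zero Φ).mpr ?_
    intro x hx
    have hx' : ∀ t, E t ⬝ᵥ (x : V n) = 0 := by
      intro t
      have h0 := congrFun hx t
      rw [hΦ x t] at h0
      simpa using h0
    have hdot : (x : V n) ⬝ᵥ (x : V n) = 0 := by
      have h1 : (x : V n) ⬝ᵥ (x : V n) = (∑ t, eW.repr x t • E t) ⬝ᵥ (x : V n) := by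
        rw [← repr_coe x]
      rw [h1, dot_sum_left]
      exact Finset.sum_eq_zero fun t _ => by rw [hx' t, mul_zero]
    exact Subtype.ext (dotProduct_self_eq_zero.mp hdot)
  have Φsurj : Function.Surjective Φ := by
    refine (LinearMap.injective_iff_surjective_of_finrank_eq_finrank ?_).mp Φinj
    rw [Module.finrank_eq_card_basis eW, Module.finrank_pi]
  have f_ex : ∀ t, ∃ ft : W, ∀ s, E s ⬝ᵥ (ft : V n) = if s = t then 1 else 0 := by
    intro t
    obtain ⟨ft, hft⟩ := Φsurj (fun s => if s = t then (1:ℝ) else 0)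
    refine ⟨ft, fun s => ?_⟩
    have h1 := congrFun hft s
    rwa [hΦ ft s] at h1
  choose f hf using f_ex
  have frepr : ∀ (x : W) t, ((f t : W) : V n) ⬝ᵥ (x : V n) = eW.repr x t := by
    intro x t
    have h1 : ((f t : W) : V n) ⬝ᵥ (x : V n)
        = ∑ s, (eW.repr x s) * (((f t : W) : V n) ⬝ᵥ E s) := by
      conv_lhs => rw [repr_coe x]
      exact dot_sum_right _ _ _
    rw [h1]
    calc ∑ s, (eW.repr x s) * (((f t : W) : V n) ⬝ᵥ E s)
        = ∑ s, if s = t then eW.repr x s else 0 := by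
          refine Finset.sum_congr rfl fun s _ => ?_
          rw [dotProduct_comm, hf t s]
          split <;> simp
      _ = eW.repr x t := by simp
  have fpairL : ∀ t (x : W), x ∈ L → ∃ mm : ℤ, ((f t : W) : V n) ⬝ᵥ (x : V n) = (mm : ℝ) := by
    intro t x hx
    exact ⟨eL.repr ⟨x, hx⟩ t, by rw [frepr x t, reprL x hx t]⟩
  set mZ : Fin k → Module.Free.ChooseBasisIndex ℤ ↥L → ℤ :=
    fun i t => eL.repr ⟨a' i, Submodule.subset_span ⟨i, rfl⟩⟩ t with hmZ
  have hma : ∀ i t, a i ⬝ᵥ ((f t : W) : V n) = ((mZ i t : ℤ) : ℝ) := by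
    intro i t
    rw [dotProduct_comm]
    have h1 : a i = ((a' i : W) : V n) := rfl
    rw [h1, frepr (a' i) t, reprL (a' i) (Submodule.subset_span ⟨i, rfl⟩) t]
  have hexp : ∀ i, a i = ∑ t, ((mZ i t : ℤ) : ℝ) • E t := by
    intro i
    calc a i = ∑ t, (eW.repr (a' i) t) • E t := repr_coe (a' i)
      _ = ∑ t, ((mZ i t : ℤ) : ℝ) • E t := Finset.sum_congr rfl fun t _ => by
          rw [reprL (a' i) (Submodule.subset_span ⟨i, rfl⟩) t]
  have hconv : (0 : Module.Free.ChooseBasisIndex ℤ ↥L → ℝ)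
      ∉ convexHull ℝ (Set.range fun i => fun t => ((mZ i t : ℤ) : ℝ)) := by
    intro hmem
    obtain ⟨ν, i0, hν0, hνsum⟩ := dirichlet mZ hmem
    have hcoord : ∀ t, ∑ i, (ν i : ℝ) * ((mZ i t : ℤ) : ℝ) = 0 := by
      intro t
      have h9 := congrFun hνsum t
      simp only [Finset.sum_apply, Pi.smul_apply, Pi.zero_apply, smul_eq_mul] at h9
      exact_mod_cast h9
    have hreal : ∑ i, (ν i : ℝ) • a i = 0 := by
      calc ∑ i, (ν i : ℝ) • a i
          = ∑ i, ∑ t, ((ν i : ℝ) * ((mZ i t : ℤ) : ℝ)) • E t := by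
            refine Finset.sum_congr rfl fun i _ => ?_
            rw [hexp i, Finset.smul_sum]
            exact Finset.sum_congr rfl fun t _ => by rw [smul_smul]
        _ = ∑ t, ∑ i, ((ν i : ℝ) * ((mZ i t : ℤ) : ℝ)) • E t := Finset.sum_comm
        _ = 0 := by
            refine Finset.sum_eq_zero fun t _ => ?_
            rw [← Finset.sum_smul, hcoord t, zero_smul]
    have hxΓ : (ν i0 : ℝ) • a i0 ∈ Γ := by
      refine (memΓ _).mpr ⟨fun i => if i = i0 then ν i0 else 0, ?_⟩
      rw [show ∑ i, (((if i = i0 then ν i0 else 0 : ℕ)) : ℝ) • a i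
          = ∑ i, (if i = i0 then (ν i0 : ℝ) • a i else 0) from
        Finset.sum_congr rfl fun i _ => by split <;> simp]
      rw [Finset.sum_ite_eq' Finset.univ i0 (fun i => (ν i0 : ℝ) • a i)]
      simp
    have hnegΓ : -((ν i0 : ℝ) • a i0) ∈ Γ := by
      refine (memΓ _).mpr ⟨fun i => if i = i0 then 0 else ν i, ?_⟩
      have e0 : ∑ i, (((if i = i0 then 0 else ν i : ℕ)) : ℝ) • a i
          = ∑ i, (if i = i0 then (0 : V n) else (ν i : ℝ) • a i) :=
        Finset.sum_congr rfl fun i _ => by split <;> simp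
      have e1 : ∑ i ∈ Finset.univ.erase i0, (if i = i0 then (0 : V n) else (ν i : ℝ) • a i)
          = ∑ i, (if i = i0 then (0 : V n) else (ν i : ℝ) • a i) :=
        Finset.sum_erase _ (if_pos rfl)
      have e2 : ∑ i ∈ Finset.univ.erase i0, (if i = i0 then (0 : V n) else (ν i : ℝ) • a i)
          = ∑ i ∈ Finset.univ.erase i0, (ν i : ℝ) • a i :=
        Finset.sum_congr rfl fun i hi => if_neg (Finset.mem_erase.mp hi).1
      have e3 : (ν i0 : ℝ) • a i0 + ∑ i ∈ Finset.univ.erase i0, (ν i : ℝ) • a i = 0 := by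
        have h13 := Finset.add_sum_erase Finset.univ (fun i => (ν i : ℝ) • a i) (Finset.mem_univ i0)
        rw [h13]
        exact hreal
      rw [e0, ← e1, e2]
      exact (eq_neg_of_add_eq_zero_right e3).symm
    have h0 : (ν i0 : ℝ) • a i0 = 0 := hpos _ hxΓ hnegΓ
    have hν0R : (ν i0 : ℝ) ≠ 0 := Nat.cast_ne_zero.mpr (Nat.pos_iff_ne_zero.mp hν0)
    rcases smul_eq_zero.mp h0 with h | h
    · exact hν0R h
    · exact a0 i0 h
  obtain ⟨cZ, hcZ⟩ := gordan mZ hconv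
  set pW : W := ∑ t, ((cZ t : ℤ) : ℝ) • (f t) with hpWdef
  have hpWcoe : (pW : V n) = ∑ t, ((cZ t : ℤ) : ℝ) • ((f t : W) : V n) := by
    rw [hpWdef, coe_sum_W]
    exact Finset.sum_congr rfl fun t _ => by rw [Submodule.coe_smul]
  have hpa : ∀ i, 1 ≤ a i ⬝ᵥ (pW : V n) := by
    intro i
    have h1 : a i ⬝ᵥ (pW : V n) = ∑ t, (cZ t : ℝ) * (a i ⬝ᵥ ((f t : W) : V n)) := by
      rw [hpWcoe]
      exact dot_sum_right _ _ _
    have h2 : a i ⬝ᵥ (pW : V n) = ((∑ t, mZ i t * cZ t : ℤ) : ℝ) := by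
      rw [h1]
      push_cast
      exact Finset.sum_congr rfl fun t _ => by rw [hma i t]; push_cast; ring
    have h3 : (0:ℝ) < ((∑ t, mZ i t * cZ t : ℤ) : ℝ) := by
      have h4 := hcZ i
      push_cast
      push_cast at h4
      exact h4
    have h5 : (0:ℤ) < ∑ t, mZ i t * cZ t := by exact_mod_cast h3
    have h6 : (1:ℤ) ≤ ∑ t, mZ i t * cZ t := h5
    rw [h2]
    exact_mod_cast h6
  have hppair : ∀ z ∈ diffSet Γ, ∃ mm : ℤ, (pW : V n) ⬝ᵥ z = (mm : ℝ) := by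
    intro z hz
    obtain ⟨x, hxL, rfl⟩ := (diffL z).mp hz
    refine ⟨∑ t, cZ t * eL.repr ⟨x, hxL⟩ t, ?_⟩
    rw [hpWcoe, dot_sum_left]
    push_cast
    exact Finset.sum_congr rfl fun t _ => by rw [frepr x t, reprL x hxL t]
  have claimB : ∀ w, w ∈ Submodule.span ℝ (diffSet Γ) →
      (∀ z ∈ diffSet Γ, ∃ mm : ℤ, w ⬝ᵥ z = (mm : ℝ)) →
      ∃ c : Fin l → ℤ, w = ∑ j, (c j : ℝ) • b j := by
    intro w hwspan hwpair
    have hNex : ∀ i : Fin k, ∃ N : ℕ, |a i ⬝ᵥ w| ≤ N := fun i => exists_nat_ge _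
    choose Nf hNf using hNex
    set N : ℕ := Finset.univ.sup Nf with hNdef
    have hNb : ∀ i, |a i ⬝ᵥ w| ≤ (N : ℝ) := by
      intro i
      refine (hNf i).trans ?_
      exact_mod_cast Finset.le_sup (Finset.mem_univ i)
    set u : V n := (N : ℝ) • (pW : V n) with hudef
    have hcone : ∀ y : V n, (∀ i, 0 ≤ a i ⬝ᵥ y) → ∀ x ∈ coneOf Γ, 0 ≤ x ⬝ᵥ y := by
      intro y hy x hx
      obtain ⟨k', c, v, hc, hv, rfl⟩ := hx
      rw [dot_sum_left]
      refine Finset.sum_nonneg fun r _ => mul_nonneg (hc r) ?_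
      obtain ⟨cv, hcv⟩ := (memΓ _).mp (hv r)
      rw [hcv, dot_sum_left]
      exact Finset.sum_nonneg fun i _ => mul_nonneg (by positivity) (hy i)
    have hua : ∀ i, 0 ≤ a i ⬝ᵥ u := by
      intro i
      rw [hudef, dotProduct_smul, smul_eq_mul]
      exact mul_nonneg (Nat.cast_nonneg N) (le_trans zero_le_one (hpa i))
    have hupair : ∀ z ∈ diffSet Γ, ∃ mm : ℤ, u ⬝ᵥ z = (mm : ℝ) := by
      intro z hz
      obtain ⟨mm, hmm⟩ := hppair z hz
      refine ⟨N * mm, ?_⟩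
      rw [hudef, smul_dotProduct, smul_eq_mul, hmm]
      push_cast
      ring
    have huDS : u ∈ dualSemigroup Γ := by
      refine ⟨⟨?_, hupair⟩, hcone u hua⟩
      rw [hspanDiff]
      exact Submodule.smul_mem _ _ pW.2
    have huwa : ∀ i, 0 ≤ a i ⬝ᵥ (u + w) := by
      intro i
      rw [dotProduct_add]
      have h1 := abs_le.mp (hNb i)
      have h2 : (N : ℝ) * 1 ≤ (N : ℝ) * (a i ⬝ᵥ (pW : V n)) :=
        mul_le_mul_of_nonneg_left (hpa i) (Nat.cast_nonneg N)
      have h3 : a i ⬝ᵥ u = (N : ℝ) * (a i ⬝ᵥ (pW : V n)) := by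
        rw [hudef, dotProduct_smul, smul_eq_mul]
      rw [h3]
      linarith [h1.1]
    have huwDS : u + w ∈ dualSemigroup Γ := by
      refine ⟨⟨?_, ?_⟩, hcone _ huwa⟩
      · rw [hspanDiff]
        refine Submodule.add_mem _ (Submodule.smul_mem _ _ pW.2) ?_
        rw [← hspanDiff]
        exact hwspan
      · intro z hz
        obtain ⟨m1, h1⟩ := hupair z hz
        obtain ⟨m2, h2⟩ := hwpair z hz
        refine ⟨m1 + m2, ?_⟩
        rw [add_dotProduct, h1, h2]
        push_cast
        ring
    obtain ⟨cu, hcu⟩ := (memDS u).mp huDS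
    obtain ⟨cw, hcw⟩ := (memDS _).mp huwDS
    refine ⟨fun j => (cw j : ℤ) - (cu j : ℤ), ?_⟩
    have h12 : w = (u + w) - u := (add_sub_cancel_left u w).symm
    rw [h12, hcw, hcu, ← Finset.sum_sub_distrib]
    refine Finset.sum_congr rfl fun j _ => ?_
    push_cast
    rw [sub_smul]
  constructor
  · -- rows
    intro v hv hvb
    set vW : W := ⟨v, hv⟩ with hvWdef
    have hfb : ∀ t, ∃ g : Fin l → ℤ, ((f t : W) : V n) = ∑ j, (g j : ℝ) • b j := by
      intro t
      refine claimB _ ?_ ?_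
      · rw [hspanDiff]
        exact (f t).2
      · intro z hz
        obtain ⟨x, hxL, rfl⟩ := (diffL z).mp hz
        exact fpairL t x hxL
    choose mj hmj using hvb
    have hcoefInt : ∀ t, ∃ Mt : ℤ, eW.repr vW t = (Mt : ℝ) := by
      intro t
      obtain ⟨g, hg⟩ := hfb t
      refine ⟨∑ j, g j * mj j, ?_⟩
      rw [← frepr vW t, show ((vW : W) : V n) = v from rfl, hg, dot_sum_left]
      push_cast
      refine Finset.sum_congr rfl fun j _ => ?_
      rw [dotProduct_comm, hmj j]
    choose M hM using hcoefInt
    have hvL : vW ∈ L := by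
      have hvWe : vW = ∑ t, (M t) • (eW t) := by
        have h1 : vW = ∑ t, (eW.repr vW t) • eW t := (Module.Basis.sum_repr eW vW).symm
        rw [h1]
        refine Finset.sum_congr rfl fun t _ => ?_
        rw [hM t]
        exact Int.cast_smul_eq_zsmul ℝ (M t) (eW t)
      rw [hvWe]
      exact Submodule.sum_mem _ fun t _ => Submodule.smul_mem _ _ (hEmem t)
    obtain ⟨c, hc⟩ := (memL vW).mp hvL
    exact ⟨c, hc⟩
  · -- columns
    intro w hwspanb hwa
    have hbW : ∀ j, b j ∈ Submodule.span ℝ (diffSet Γ) := fun j => (bDS j).1.1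
    have hwspan : w ∈ Submodule.span ℝ (diffSet Γ) := by
      have h1 : Submodule.span ℝ (Set.range b) ≤ Submodule.span ℝ (diffSet Γ) := by
        rw [Submodule.span_le]
        rintro z ⟨j, rfl⟩
        exact hbW j
      exact h1 hwspanb
    have hwpair : ∀ z ∈ diffSet Γ, ∃ mm : ℤ, w ⬝ᵥ z = (mm : ℝ) := by
      intro z hz
      obtain ⟨d, rfl⟩ := (diffChar z).mp hz
      choose mi hmi using hwa
      refine ⟨∑ i, d i * mi i, ?_⟩
      rw [dot_sum_right]
      push_cast
      refine Finset.sum_congr rfl fun i _ => ?_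
      rw [dotProduct_comm, hmi i]
    exact claimB w hwspan hwpair

end SlackAux4


/-- If `S` is the slack matrix of a positive affine semigroup, then
`Λ_S^row = ℤ^l ∩ Row(S)` and `Λ_S^col = ℤ^k ∩ Col(S)`. -/
theorem lattice_generating_conditions {n k l : ℕ} (Γ : Set (V n))
    (hΓ : IsAffineSemigroup Γ) (hpos : IsPositive Γ)
    (S : Matrix (Fin k) (Fin l) ℤ) (hS : IsSlackMatrix Γ S) :
    LambdaRow S = intPts l ∩ RowSpace S ∧ LambdaCol S = intPts k ∩ ColSpace S := by
  classical
  obtain ⟨a, b, -, -, ha, hb, hab⟩ := hS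
  obtain ⟨keyRow, keyCol⟩ := SlackAux4.key hΓ.2 hpos ha hb
  have hrowj : ∀ i j, rowVec S i j = a i ⬝ᵥ b j := fun i j => hab i j
  have hcolj : ∀ j i, colVec S j i = a i ⬝ᵥ b j := fun j i => hab i j
  constructor
  · ext x
    constructor
    · rintro ⟨c, rfl⟩
      refine ⟨?_, ?_⟩
      · intro j
        refine ⟨∑ i, c i * S i j, ?_⟩
        simp only [Finset.sum_apply, Pi.smul_apply, smul_eq_mul]
        push_cast
        rfl
      · exact Submodule.sum_mem _ fun i _ =>
          Submodule.smul_mem _ _ (Submodule.subset_span ⟨i, rfl⟩)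
    · rintro ⟨hxint, hxspan⟩
      obtain ⟨r, hr⟩ := (Submodule.mem_span_range_iff_exists_fun ℝ).mp hxspan
      have hvspan : (∑ i, r i • a i) ∈ Submodule.span ℝ (Set.range a) :=
        Submodule.sum_mem _ fun i _ => Submodule.smul_mem _ _ (Submodule.subset_span ⟨i, rfl⟩)
      have hvb : ∀ j, (∑ i, r i • a i) ⬝ᵥ b j = x j := by
        intro j
        rw [SlackAux4.dot_sum_left, ← hr]
        simp only [Finset.sum_apply, Pi.smul_apply, smul_eq_mul]
        exact Finset.sum_congr rfl fun i _ => by rw [hrowj i j]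
      obtain ⟨c, hc⟩ := keyRow _ hvspan (fun j => by
        obtain ⟨m, hm⟩ := hxint j
        exact ⟨m, by rw [hvb j, hm]⟩)
      refine ⟨c, funext fun j => ?_⟩
      have h1 : (∑ i, r i • a i) ⬝ᵥ b j = ∑ i, (c i : ℝ) * (a i ⬝ᵥ b j) := by
        rw [hc, SlackAux4.dot_sum_left]
      calc x j = (∑ i, r i • a i) ⬝ᵥ b j := (hvb j).symm
        _ = ∑ i, (c i : ℝ) * (a i ⬝ᵥ b j) := h1
        _ = (∑ i, (c i : ℝ) • rowVec S i) j := by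
            simp only [Finset.sum_apply, Pi.smul_apply, smul_eq_mul]
            exact Finset.sum_congr rfl fun i _ => by rw [hrowj i j]
  · ext x
    constructor
    · rintro ⟨c, rfl⟩
      refine ⟨?_, ?_⟩
      · intro i
        refine ⟨∑ j, c j * S i j, ?_⟩
        simp only [Finset.sum_apply, Pi.smul_apply, smul_eq_mul]
        push_cast
        rfl
      · exact Submodule.sum_mem _ fun j _ =>
          Submodule.smul_mem _ _ (Submodule.subset_span ⟨j, rfl⟩)
    · rintro ⟨hxint, hxspan⟩
      obtain ⟨r, hr⟩ := (Submodule.mem_span_range_iff_exists_fun ℝ).mp hxspan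
      have hwspan : (∑ j, r j • b j) ∈ Submodule.span ℝ (Set.range b) :=
        Submodule.sum_mem _ fun j _ => Submodule.smul_mem _ _ (Submodule.subset_span ⟨j, rfl⟩)
      have hwa : ∀ i, a i ⬝ᵥ (∑ j, r j • b j) = x i := by
        intro i
        rw [SlackAux4.dot_sum_right, ← hr]
        simp only [Finset.sum_apply, Pi.smul_apply, smul_eq_mul]
        exact Finset.sum_congr rfl fun j _ => by rw [hcolj j i]
      obtain ⟨c, hc⟩ := keyCol _ hwspan (fun i => by
        obtain ⟨m, hm⟩ := hxint i
        exact ⟨m, by rw [hwa i, hm]⟩)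
      refine ⟨c, funext fun i => ?_⟩
      have h1 : a i ⬝ᵥ (∑ j, r j • b j) = ∑ j, (c j : ℝ) * (a i ⬝ᵥ b j) := by
        rw [hc, SlackAux4.dot_sum_right]
      calc x i = a i ⬝ᵥ (∑ j, r j • b j) := (hwa i).symm
        _ = ∑ j, (c j : ℝ) * (a i ⬝ᵥ b j) := h1
        _ = (∑ j, (c j : ℝ) • colVec S j) i := by
            simp only [Finset.sum_apply, Pi.smul_apply, smul_eq_mul]
            exact Finset.sum_congr rfl fun j _ => by rw [hcolj j i]

end
end
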